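/- arXiv:1904.03271 — 7 statements merged into one kernel-verified Lean document; each statement's English description precedes it below -/
import Mathlib

section
/- The rank over the binary field F_2 of the incidence matrix A* of the complete k-uniform hypergraph on n vertices (rows indexed by k-subsets e of [n], columns indexed by (k-1)-subsets t of [n], with entry A*_{e,t} = 1 if t ⊆ e and 0 otherwise) equals binom(n-1, k-1), for 2 ≤ k ≤ n. -/
open Finset

lemma key_row (n k : ℕ) (hk : 2 ≤ k) (z : Fin n) (e t : Finset (Fin n))
    (he : e.card = k) (hze : z ∉ e) (ht : t.card = k - 1) :
    (if t ⊆ e then (1 : ZMod 2) else 0) =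
      ∑ x ∈ e, (if t ⊆ insert z (e.erase x) then (1 : ZMod 2) else 0) := by
  classical
  rw [Finset.sum_boole]
  by_cases hzt : z ∈ t
  · have hcond : ∀ x ∈ e, (t ⊆ insert z (e.erase x) ↔ t.erase z ⊆ e ∧ x ∉ t.erase z) := by
      intro x hx
      rw [Finset.subset_insert_iff, Finset.subset_erase]
    have hte : ¬ t ⊆ e := fun h => hze (h hzt)
    rw [if_neg hte]
    by_cases hsub : t.erase z ⊆ e
    · have : e.filter (fun x => t ⊆ insert z (e.erase x)) = e \ t.erase z := by
        ext x
        simp only [Finset.mem_filter, Finset.mem_sdiff]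
        constructor
        · rintro ⟨hx, h⟩; exact ⟨hx, ((hcond x hx).1 h).2⟩
        · rintro ⟨hx, h⟩; exact ⟨hx, (hcond x hx).2 ⟨hsub, h⟩⟩
      rw [this, Finset.card_sdiff_of_subset hsub, Finset.card_erase_of_mem hzt, he, ht]
      have : k - (k - 1 - 1) = 2 := by omega
      rw [this]; decide
    · have : e.filter (fun x => t ⊆ insert z (e.erase x)) = ∅ := by
        ext x
        simp only [Finset.mem_filter, Finset.notMem_empty, iff_false, not_and]
        intro hx h
        exact hsub ((hcond x hx).1 h).1
      rw [this]; simp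
  · have hcond : ∀ x, (t ⊆ insert z (e.erase x) ↔ t ⊆ e.erase x) := by
      intro x
      rw [Finset.subset_insert_iff, Finset.erase_eq_of_notMem hzt]
    by_cases hte : t ⊆ e
    · have : e.filter (fun x => t ⊆ insert z (e.erase x)) = e \ t := by
        ext x
        simp only [Finset.mem_filter, Finset.mem_sdiff]
        constructor
        · rintro ⟨hx, h⟩
          exact ⟨hx, fun hxt => ((Finset.subset_erase.1 ((hcond x).1 h)).2 hxt)⟩
        · rintro ⟨hx, h⟩
          exact ⟨hx, (hcond x).2 (Finset.subset_erase.2 ⟨hte, h⟩)⟩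
      rw [if_pos hte, this, Finset.card_sdiff_of_subset hte, he, ht]
      have : k - (k - 1) = 1 := by omega
      rw [this]; norm_num
    · have : e.filter (fun x => t ⊆ insert z (e.erase x)) = ∅ := by
        ext x
        simp only [Finset.mem_filter, Finset.notMem_empty, iff_false, not_and]
        intro hx h
        exact hte ((Finset.subset_erase.1 ((hcond x).1 h)).1)
      rw [if_neg hte, this]; simp

theorem stmt_0 (n k : ℕ) (h2 : 2 ≤ k) (hkn : k ≤ n) :
    Matrix.rank (Matrix.of (fun (e : {s : Finset (Fin n) // s.card = k})
        (t : {s : Finset (Fin n) // s.card = k - 1}) =>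
        if t.1 ⊆ e.1 then (1 : ZMod 2) else 0)) = (n - 1).choose (k - 1) := by
  classical
  have hn : 0 < n := lt_of_lt_of_le (by omega) hkn
  set z : Fin n := ⟨0, hn⟩ with hz
  set M : Matrix {s : Finset (Fin n) // s.card = k} {s : Finset (Fin n) // s.card = k - 1} (ZMod 2) :=
    Matrix.of (fun e t => if t.1 ⊆ e.1 then (1 : ZMod 2) else 0) with hMdef
  show M.rank = (n - 1).choose (k - 1)
  set J := {s : Finset (Fin n) // s.card = k ∧ z ∈ s} with hJ
  set v : J → ({s : Finset (Fin n) // s.card = k - 1} → ZMod 2) :=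
    fun e => M ⟨e.1, e.2.1⟩ with hv
  -- span of all rows equals span of distinguished rows
  have hspan : Submodule.span (ZMod 2) (Set.range M) = Submodule.span (ZMod 2) (Set.range v) := by
    apply le_antisymm
    · rw [Submodule.span_le]
      rintro _ ⟨e, rfl⟩
      by_cases hze : z ∈ e.1
      · exact Submodule.subset_span ⟨⟨e.1, e.2, hze⟩, rfl⟩
      · have hrow : M e = ∑ x ∈ e.1.attach,
            v ⟨insert z (e.1.erase x.1), by
              constructor
              · rw [Finset.card_insert_of_notMem
                  (fun h => hze (Finset.mem_of_mem_erase h)),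
                  Finset.card_erase_of_mem x.2, e.2]
                omega
              · exact Finset.mem_insert_self _ _⟩ := by
          funext t
          rw [Finset.sum_apply]
          have := key_row n k h2 z e.1 t.1 e.2 hze t.2
          rw [show (M e t = if t.1 ⊆ e.1 then (1 : ZMod 2) else 0) from rfl, this,
            ← Finset.sum_attach e.1 (fun x => if t.1 ⊆ insert z (e.1.erase x) then (1 : ZMod 2) else 0)]
          rfl
        rw [hrow]
        exact Submodule.sum_mem _ (fun x _ => Submodule.subset_span ⟨_, rfl⟩)
    · rw [Submodule.span_le]
      rintro _ ⟨e, rfl⟩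
      exact Submodule.subset_span ⟨⟨e.1, e.2.1⟩, rfl⟩
  -- the distinguished rows are linearly independent
  have hindep : LinearIndependent (ZMod 2) v := by
    rw [Fintype.linearIndependent_iff]
    intro g hg e
    have ht : (e.1.erase z).card = k - 1 := by
      rw [Finset.card_erase_of_mem e.2.2, e.2.1]
    have := congrFun hg ⟨e.1.erase z, ht⟩
    rw [Finset.sum_apply] at this
    simp only [Pi.zero_apply] at this
    have h1 : ∑ c : J, (g c • v c) ⟨e.1.erase z, ht⟩ = (g e • v e) ⟨e.1.erase z, ht⟩ := by
      apply Finset.sum_eq_single_of_mem e (Finset.mem_univ e)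
      intro f _ hfe
      have hns : ¬ (e.1.erase z ⊆ f.1) := by
        intro hsub
        apply hfe
        have hef : e.1 ⊆ f.1 := by
          intro x hx
          by_cases hxz : x = z
          · exact hxz ▸ f.2.2
          · exact hsub (Finset.mem_erase.2 ⟨hxz, hx⟩)
        have : e.1 = f.1 := Finset.eq_of_subset_of_card_le hef (by rw [e.2.1, f.2.1])
        exact Subtype.ext this.symm
      show g f • (if (e.1.erase z : Finset (Fin n)) ⊆ f.1 then (1 : ZMod 2) else 0) = 0
      rw [if_neg hns, smul_zero]
    rw [h1] at this
    have h2 : (g e • v e) ⟨e.1.erase z, ht⟩ = g e := by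
      show g e • (if (e.1.erase z : Finset (Fin n)) ⊆ e.1 then (1 : ZMod 2) else 0) = g e
      rw [if_pos (Finset.erase_subset _ _), smul_eq_mul, mul_one]
    rw [h2] at this
    exact this
  -- count the distinguished rows
  have hcard : Fintype.card J = (n - 1).choose (k - 1) := by
    have hequiv : J ≃ {s : Finset (Fin n) // s ∈ (Finset.univ.erase z).powersetCard (k - 1)} :=
      { toFun := fun e => ⟨e.1.erase z, Finset.mem_powersetCard.2
          ⟨Finset.erase_subset_erase _ (Finset.subset_univ _),
           by rw [Finset.card_erase_of_mem e.2.2, e.2.1]⟩⟩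
        invFun := fun s => ⟨insert z s.1, by
          obtain ⟨hsub, hcard⟩ := Finset.mem_powersetCard.1 s.2
          have hzs : z ∉ s.1 := fun h => (Finset.mem_erase.1 (hsub h)).1 rfl
          exact ⟨by rw [Finset.card_insert_of_notMem hzs, hcard]; omega,
            Finset.mem_insert_self _ _⟩⟩
        left_inv := fun e => Subtype.ext (Finset.insert_erase e.2.2)
        right_inv := fun s => by
          have hsub := (Finset.mem_powersetCard.1 s.2).1
          have hzs : z ∉ s.1 := fun h => (Finset.mem_erase.1 (hsub h)).1 rfl
          exact Subtype.ext (Finset.erase_insert hzs) }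
    rw [Fintype.card_congr hequiv, Fintype.card_coe, Finset.card_powersetCard,
      Finset.card_erase_of_mem (Finset.mem_univ z), Finset.card_univ, Fintype.card_fin]
  rw [Matrix.rank_eq_finrank_span_row]
  change Module.finrank (ZMod 2) (Submodule.span (ZMod 2) (Set.range M)) = _
  rw [hspan, finrank_span_eq_card hindep, hcard]
end

section
/- In the F_2 row space of the incidence matrix A* of the complete k-uniform hypergraph on n vertices, the rows indexed by the k-subsets containing the vertex 1 (i.e., the star at vertex 1) form a linearly independent set that spans the full row space of A*. -/
theorem stmt_1 (n k : ℕ) (h2 : 2 ≤ k) (hkn : k ≤ n) (v₀ : Fin n) (hv₀ : v₀.val = 0) :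
    LinearIndependent (ZMod 2)
      (fun (e : {s : Finset (Fin n) // s.card = k ∧ v₀ ∈ s}) =>
        (fun (t : {s : Finset (Fin n) // s.card = k - 1}) =>
          if t.1 ⊆ e.1 then (1 : ZMod 2) else 0)) ∧
    Submodule.span (ZMod 2)
      (Set.range (fun (e : {s : Finset (Fin n) // s.card = k ∧ v₀ ∈ s}) =>
        (fun (t : {s : Finset (Fin n) // s.card = k - 1}) =>
          if t.1 ⊆ e.1 then (1 : ZMod 2) else 0))) =
    Submodule.span (ZMod 2)
      (Set.range (fun (e : {s : Finset (Fin n) // s.card = k}) =>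
        (fun (t : {s : Finset (Fin n) // s.card = k - 1}) =>
          if t.1 ⊆ e.1 then (1 : ZMod 2) else 0))) := by
  classical
  constructor
  · rw [Fintype.linearIndependent_iff]
    intro g hg e
    have hv₀e : v₀ ∈ e.1 := e.2.2
    have hcard : (e.1.erase v₀).card = k - 1 := by
      rw [Finset.card_erase_of_mem hv₀e, e.2.1]
    have h1 := congrFun hg ⟨e.1.erase v₀, hcard⟩
    simp only [Finset.sum_apply, Pi.smul_apply, smul_eq_mul, Pi.zero_apply] at h1
    rw [Finset.sum_eq_single e] at h1
    · simpa [Finset.erase_subset] using h1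
    · intro e' _ hne
      have hns : ¬ e.1.erase v₀ ⊆ e'.1 := by
        intro hsub
        apply hne
        have hsub2 : e.1 ⊆ e'.1 := by
          intro x hx
          by_cases hxv : x = v₀
          · exact hxv ▸ e'.2.2
          · exact hsub (Finset.mem_erase.mpr ⟨hxv, hx⟩)
        have := Finset.eq_of_subset_of_card_le hsub2 (by rw [e.2.1, e'.2.1])
        exact Subtype.ext this.symm
      simp [hns]
    · intro h; exact absurd (Finset.mem_univ e) h
  · apply le_antisymm
    · apply Submodule.span_mono
      rintro _ ⟨e, rfl⟩
      exact ⟨⟨e.1, e.2.1⟩, rfl⟩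
    · rw [Submodule.span_le]
      rintro _ ⟨e, rfl⟩
      by_cases hv : v₀ ∈ e.1
      · exact Submodule.subset_span ⟨⟨e.1, e.2, hv⟩, rfl⟩
      · have key : (fun t : {s : Finset (Fin n) // s.card = k - 1} =>
              if t.1 ⊆ e.1 then (1 : ZMod 2) else 0)
            = ∑ t ∈ e.1.powersetCard (k - 1),
                (fun tt : {s : Finset (Fin n) // s.card = k - 1} =>
                  if tt.1 ⊆ insert v₀ t then (1 : ZMod 2) else 0) := by
          funext s
          rw [Finset.sum_apply]
          rw [Finset.sum_boole]
          by_cases hvs : v₀ ∈ s.1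
          · have hse : ¬ s.1 ⊆ e.1 := fun h => hv (h hvs)
            rw [if_neg hse]
            set u := s.1.erase v₀ with hu
            have hucard : u.card = k - 2 := by
              rw [hu, Finset.card_erase_of_mem hvs, s.2]; omega
            by_cases hue : u ⊆ e.1
            · have hfil : (e.1.powersetCard (k - 1)).filter
                  (fun t => s.1 ⊆ insert v₀ t)
                  = (e.1 \ u).image (fun x => insert x u) := by
                ext t
                simp only [Finset.mem_filter, Finset.mem_powersetCard,
                  Finset.mem_image, Finset.mem_sdiff]
                constructor
                · rintro ⟨⟨hte, htc⟩, hst⟩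
                  have hut : u ⊆ t := by
                    intro x hx
                    have hxs : x ∈ s.1 := Finset.mem_of_mem_erase hx
                    have hxv : x ≠ v₀ := (Finset.mem_erase.mp hx).1
                    rcases Finset.mem_insert.mp (hst hxs) with h | h
                    · exact absurd h hxv
                    · exact h
                  have hlt : u ⊂ t := hut.ssubset_of_ne (by
                    intro h
                    rw [h] at hucard
                    omega)
                  obtain ⟨x, hxt, hxu⟩ := Finset.exists_of_ssubset hlt
                  refine ⟨x, ⟨hte hxt, hxu⟩, ?_⟩
                  apply Finset.eq_of_subset_of_card_le
                  · intro y hy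
                    rcases Finset.mem_insert.mp hy with h | h
                    · exact h ▸ hxt
                    · exact hut h
                  · rw [Finset.card_insert_of_notMem hxu, hucard, htc]; omega
                · rintro ⟨x, ⟨hxe, hxu⟩, rfl⟩
                  refine ⟨⟨?_, ?_⟩, ?_⟩
                  · intro y hy
                    rcases Finset.mem_insert.mp hy with h | h
                    · exact h ▸ hxe
                    · exact hue h
                  · rw [Finset.card_insert_of_notMem hxu, hucard]; omega
                  · intro y hy
                    by_cases hyv : y = v₀
                    · exact hyv ▸ Finset.mem_insert_self _ _
                    · have : y ∈ u := Finset.mem_erase.mpr ⟨hyv, hy⟩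
                      exact Finset.mem_insert_of_mem (Finset.mem_insert_of_mem this)
              rw [hfil, Finset.card_image_of_injOn, Finset.card_sdiff_of_subset hue,
                e.2, hucard]
              · have h22 : k - (k - 2) = 2 := by omega
                rw [h22]
                decide
              · intro x hx y hy hxy
                have hxu : x ∉ u := (Finset.mem_sdiff.mp hx).2
                have hyu : y ∉ u := (Finset.mem_sdiff.mp hy).2
                have hxy' : insert x u = insert y u := hxy
                have : x ∈ insert y u := hxy' ▸ Finset.mem_insert_self x u
                rcases Finset.mem_insert.mp this with h | h
                · exact h
                · exact absurd h hxu
            · have hfil : (e.1.powersetCard (k - 1)).filter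
                  (fun t => s.1 ⊆ insert v₀ t) = ∅ := by
                rw [Finset.filter_eq_empty_iff]
                intro t ht hst
                apply hue
                intro x hx
                have hxs : x ∈ s.1 := Finset.mem_of_mem_erase hx
                have hxv : x ≠ v₀ := (Finset.mem_erase.mp hx).1
                rcases Finset.mem_insert.mp (hst hxs) with h | h
                · exact absurd h hxv
                · exact (Finset.mem_powersetCard.mp ht).1 h
              rw [hfil]
              simp
          · have hfil : (e.1.powersetCard (k - 1)).filter
                (fun t => s.1 ⊆ insert v₀ t)
                = if s.1 ⊆ e.1 then {s.1} else ∅ := by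
              ext t
              simp only [Finset.mem_filter, Finset.mem_powersetCard]
              split_ifs with hse
              · simp only [Finset.mem_singleton]
                constructor
                · rintro ⟨⟨hte, htc⟩, hst⟩
                  have hst' : s.1 ⊆ t := by
                    intro x hx
                    rcases Finset.mem_insert.mp (hst hx) with h | h
                    · exact absurd (h ▸ hx) hvs
                    · exact h
                  exact (Finset.eq_of_subset_of_card_le hst'
                    (by rw [htc, s.2])).symm
                · rintro rfl
                  exact ⟨⟨hse, s.2⟩, Finset.subset_insert _ _⟩
              · simp only [Finset.notMem_empty, iff_false]
                rintro ⟨⟨hte, htc⟩, hst⟩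
                apply hse
                intro x hx
                rcases Finset.mem_insert.mp (hst hx) with h | h
                · exact absurd (h ▸ hx) hvs
                · exact hte h
            rw [hfil]
            split_ifs with hse <;> simp
        rw [SetLike.mem_coe]
        beta_reduce
        rw [key]
        apply Submodule.sum_mem
        intro t ht
        obtain ⟨htsub, htcard⟩ := Finset.mem_powersetCard.mp ht
        have hvt : v₀ ∉ t := fun h => hv (htsub h)
        have hic : (insert v₀ t).card = k := by
          rw [Finset.card_insert_of_notMem hvt, htcard]; omega
        exact Submodule.subset_span
          ⟨⟨insert v₀ t, hic, Finset.mem_insert_self _ _⟩, rfl⟩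
end

section
/- For any k-subset e of [n] with 1 ∉ e, the row r_e of the complete incidence matrix A* is equal (over F_2) to the sum of the k rows r_{e_i}, where e_i = (e ∪ {1}) \ {i-th element of e} for i = 1,...,k. -/
theorem stmt_2 (n k : ℕ) (h2 : 2 ≤ k) (hkn : k ≤ n) (v₀ : Fin n) (hv₀ : v₀.val = 0)
    (e : Finset (Fin n)) (he : e.card = k) (h1 : v₀ ∉ e) :
    ∀ t : Finset (Fin n), t.card = k - 1 →
      (if t ⊆ e then (1 : ZMod 2) else 0) =
        ∑ i ∈ e, (if t ⊆ (insert v₀ e).erase i then (1 : ZMod 2) else 0) := by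
  intro t ht
  have hsum : ∑ i ∈ e, (if t ⊆ (insert v₀ e).erase i then (1 : ZMod 2) else 0)
      = ((e.filter (fun i => t ⊆ (insert v₀ e).erase i)).card : ZMod 2) := by
    rw [Finset.sum_boole]
  rw [hsum]
  have hfil : e.filter (fun i => t ⊆ (insert v₀ e).erase i)
      = e.filter (fun i => t ⊆ insert v₀ e ∧ i ∉ t) := by
    apply Finset.filter_congr
    intro i hi
    simp [Finset.subset_erase]
  rw [hfil]
  by_cases hsub : t ⊆ insert v₀ e
  · have hfil2 : e.filter (fun i => t ⊆ insert v₀ e ∧ i ∉ t) = e \ t := by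
      ext x
      simp only [Finset.mem_filter, Finset.mem_sdiff]
      tauto
    rw [hfil2]
    have hcard : (e \ t).card + (e ∩ t).card = e.card :=
      Finset.card_sdiff_add_card_inter e t
    by_cases hte : t ⊆ e
    · have : e ∩ t = t := Finset.inter_eq_right.mpr hte
      rw [this, ht, he] at hcard
      have h1card : (e \ t).card = 1 := by omega
      rw [h1card]
      simp [hte]
    · have hv0t : v₀ ∈ t := by
        by_contra hv
        exact hte (fun x hx => by
          have := hsub hx
          rcases Finset.mem_insert.mp this with h | h
          · exact absurd (h ▸ hx) hv
          · exact h)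
      have hint : e ∩ t = t.erase v₀ := by
        ext x
        simp only [Finset.mem_inter, Finset.mem_erase]
        constructor
        · rintro ⟨hxe, hxt⟩
          exact ⟨fun h => h1 (h ▸ hxe), hxt⟩
        · rintro ⟨hxv, hxt⟩
          refine ⟨?_, hxt⟩
          rcases Finset.mem_insert.mp (hsub hxt) with h | h
          · exact absurd h hxv
          · exact h
      rw [hint, Finset.card_erase_of_mem hv0t, ht, he] at hcard
      have h2card : (e \ t).card = 2 := by omega
      rw [h2card]
      simp [hte]
      decide
  · have hfil2 : e.filter (fun i => t ⊆ insert v₀ e ∧ i ∉ t) = ∅ := by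
      apply Finset.filter_false_of_mem
      intro i hi
      tauto
    rw [hfil2]
    have hte : ¬ t ⊆ e := fun h => hsub (h.trans (Finset.subset_insert _ _))
    simp [hte]
end

section
/- Let G = (V,E) be a path-connected, cycle-free hypergraph with all hyperedges nonempty. Then the sum over all vertices v ∈ V of (deg(v) - 1) equals |E| - 1, where deg(v) is the number of hyperedges containing v. -/
/-- A simple path from `u` to `w` in the hypergraph with hyperedge set `E`:
distinct vertices `v 0 = u, …, v k = w` and distinct hyperedges `A 1, …, A k`
with consecutive vertices belonging to the corresponding hyperedge. -/
def IsSimplePath {V : Type*} (E : Finset (Finset V)) (u w : V) : Prop :=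
  ∃ (k : ℕ) (v : Fin (k + 1) → V) (A : Fin k → Finset V),
    Function.Injective v ∧ Function.Injective A ∧ (∀ i, A i ∈ E) ∧
    v 0 = u ∧ v (Fin.last k) = w ∧
    ∀ i : Fin k, v i.castSucc ∈ A i ∧ v i.succ ∈ A i

/-- The hypergraph is path-connected: every pair of vertices is joined by a simple path. -/
def PathConn (V : Type*) (E : Finset (Finset V)) : Prop :=
  ∀ u w : V, IsSimplePath E u w

/-- A simple cycle: distinct vertices `v 0, …, v (k-1)` and distinct hyperedges
`A 0, …, A (k-1)` with `v i, v (i+1 mod k) ∈ A i`. -/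
def HasSimpleCycle {V : Type*} (E : Finset (Finset V)) : Prop :=
  ∃ k : ℕ, ∃ hk : 2 ≤ k, ∃ (v : Fin k → V) (A : Fin k → Finset V),
    Function.Injective v ∧ Function.Injective A ∧ (∀ i, A i ∈ E) ∧
    ∀ i : Fin k, v i ∈ A i ∧ v ⟨(i.val + 1) % k, Nat.mod_lt _ (by omega)⟩ ∈ A i

set_option linter.unusedSectionVars false

namespace Stmt5Aux

open SimpleGraph

/-! ### Generic walk lemmas -/

lemma support_getElem_eq {α : Type*} {G : SimpleGraph α} {u v : α} (p : G.Walk u v) :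
    ∀ (i : ℕ) (h : i < p.support.length), p.support[i] = p.getVert i := by
  induction p with
  | nil =>
    intro i h
    simp only [Walk.support_nil, List.length_singleton] at h
    interval_cases i
    simp [Walk.getVert_zero]
  | cons hadj q ih =>
    intro i h
    cases i with
    | zero => simp [Walk.support_cons, Walk.getVert_zero]
    | succ i =>
      simp only [Walk.support_cons, List.length_cons] at h
      simp only [Walk.support_cons, List.getElem_cons_succ, Walk.getVert_cons_succ]
      exact ih i (by simpa using h)

lemma cycle_getVert_inj {α : Type*} {G : SimpleGraph α} {x : α} {c : G.Walk x x}
    (hc : c.IsCycle) {i j : ℕ} (hi1 : 1 ≤ i) (hi2 : i ≤ c.length)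
    (hj1 : 1 ≤ j) (hj2 : j ≤ c.length) (h : c.getVert i = c.getVert j) : i = j := by
  have hnd := hc.support_nodup
  have hlen : c.support.length = c.length + 1 := c.length_support
  have hlt : c.support.tail.length = c.length := by
    rw [List.length_tail, hlen]; omega
  have key : ∀ m (hm1 : 1 ≤ m) (hm2 : m ≤ c.length) (hx : m - 1 < c.support.tail.length),
      c.support.tail[m-1] = c.getVert m := by
    intro m hm1 hm2 hx
    have h1 : c.support.tail[m-1] = c.support[(m-1)+1]'(by omega) :=
      List.getElem_tail hx
    rw [h1, support_getElem_eq c ((m-1)+1) (by omega)]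
    congr 1
    omega
  have e1 := key i hi1 hi2 (by omega)
  have e2 := key j hj1 hj2 (by omega)
  rw [← e1, ← e2] at h
  have := (List.Nodup.getElem_inj_iff hnd).mp h
  omega

/-! ### The incidence graph -/

variable {V : Type*} [Fintype V] [DecidableEq V] (E : Finset (Finset V))

/-- degree of a vertex in the hypergraph -/
abbrev deg (v : V) : ℕ := (E.filter (fun A => v ∈ A)).card

/-- vertices lying in some hyperedge -/
abbrev P (v : V) : Prop := ∃ A ∈ E, v ∈ A

/-- node type of the incidence graph -/
abbrev W := {v : V // P E v} ⊕ {A : Finset V // A ∈ E}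

def adj : W E → W E → Prop
  | .inl v, .inr A => v.1 ∈ A.1
  | .inr A, .inl v => v.1 ∈ A.1
  | _, _ => False

instance : DecidableRel (adj E) := fun x y =>
  match x, y with
  | .inl v, .inr A => inferInstanceAs (Decidable (v.1 ∈ A.1))
  | .inr A, .inl v => inferInstanceAs (Decidable (v.1 ∈ A.1))
  | .inl _, .inl _ => .isFalse id
  | .inr _, .inr _ => .isFalse id

/-- the incidence graph -/
def IG : SimpleGraph (W E) where
  Adj := adj E
  symm := ⟨by rintro (v|A) (w|B) h <;> simp_all [adj]⟩
  loopless := ⟨by rintro (v|A) h <;> simp_all [adj]⟩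

instance : DecidableRel (IG E).Adj := inferInstanceAs (DecidableRel (adj E))

lemma adj_isLeft {x y : W E} (h : (IG E).Adj x y) : y.isLeft = !x.isLeft := by
  rcases x with v | A <;> rcases y with w | B <;> first | rfl | exact absurd h id

/-! ### Degrees -/

lemma degree_inl (v : {v : V // P E v}) : (IG E).degree (.inl v) = deg E v.1 := by
  classical
  rw [degree, neighborFinset_eq_filter]
  apply Finset.card_bij (fun y _ => Sum.elim (fun _ => (∅ : Finset V)) Subtype.val y)
  · rintro (w|A) hy
    · simp only [Finset.mem_filter] at hy; exact absurd hy.2 id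
    · simp only [Finset.mem_filter, Finset.mem_univ, true_and] at hy ⊢
      exact ⟨A.2, hy⟩
  · rintro (w|A) h1 (w'|A') h2 h
    · simp only [Finset.mem_filter] at h1; exact absurd h1.2 id
    · simp only [Finset.mem_filter] at h1; exact absurd h1.2 id
    · simp only [Finset.mem_filter] at h2; exact absurd h2.2 id
    · exact congrArg Sum.inr (Subtype.ext h)
  · intro A hA
    simp only [Finset.mem_filter] at hA
    exact ⟨.inr ⟨A, hA.1⟩, Finset.mem_filter.2 ⟨Finset.mem_univ _, hA.2⟩, rfl⟩

lemma degree_inr [Nonempty V] (A : {A : Finset V // A ∈ E}) :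
    (IG E).degree (.inr A) = A.1.card := by
  classical
  rw [degree, neighborFinset_eq_filter]
  apply Finset.card_bij (fun y _ => Sum.elim Subtype.val (fun _ => Classical.arbitrary V) y)
  · rintro (w|B) hy
    · simp only [Finset.mem_filter, Finset.mem_univ, true_and] at hy ⊢
      exact hy
    · simp only [Finset.mem_filter] at hy; exact absurd hy.2 id
  · rintro (w|B) h1 (w'|B') h2 h
    · simpa [Subtype.ext_iff] using h
    · simp only [Finset.mem_filter] at h2; exact absurd h2.2 id
    · simp only [Finset.mem_filter] at h1; exact absurd h1.2 id
    · simp only [Finset.mem_filter] at h1; exact absurd h1.2 id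
  · intro v hv
    exact ⟨.inl ⟨v, ⟨A.1, A.2, hv⟩⟩, Finset.mem_filter.2 ⟨Finset.mem_univ _, hv⟩, rfl⟩

/-! ### Counting -/

lemma double_count : ∑ A ∈ E, A.card = ∑ v : V, deg E v := by
  classical
  have h1 : ∀ A : Finset V, A.card = ∑ v : V, if v ∈ A then 1 else 0 := by
    intro A
    rw [← Finset.card_filter, Finset.filter_univ_mem]
  have h2 : ∀ v : V, deg E v = ∑ A ∈ E, if v ∈ A then 1 else 0 := fun v =>
    Finset.card_filter _ _
  simp_rw [h1, h2]
  exact Finset.sum_comm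

lemma sum_deg_filter : ∑ v ∈ Finset.univ.filter (P E), deg E v = ∑ v : V, deg E v := by
  classical
  apply Finset.sum_subset (Finset.filter_subset _ _)
  intro v _ hv
  simp only [Finset.mem_filter, Finset.mem_univ, true_and, P] at hv
  push_neg at hv
  rw [Finset.card_eq_zero, Finset.filter_eq_empty_iff]
  exact fun A hA hvA => hv A hA hvA

lemma lhs_eq : ∑ v : V, (deg E v - 1) = ∑ v : V, deg E v - (Finset.univ.filter (P E)).card := by
  classical
  have h0 : ∑ v : V, (deg E v - 1) = ∑ v ∈ Finset.univ.filter (P E), (deg E v - 1) := by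
    symm
    apply Finset.sum_subset (Finset.filter_subset _ _)
    intro v _ hv
    simp only [Finset.mem_filter, Finset.mem_univ, true_and, P] at hv
    push_neg at hv
    have : deg E v = 0 := by
      rw [Finset.card_eq_zero, Finset.filter_eq_empty_iff]
      exact fun A hA hvA => hv A hA hvA
    omega
  rw [h0, ← sum_deg_filter E, Finset.sum_tsub_distrib, Finset.sum_const, smul_eq_mul, mul_one]
  intro v hv
  simp only [Finset.mem_filter, Finset.mem_univ, true_and, P] at hv
  obtain ⟨A, hA, hvA⟩ := hv
  rw [Nat.one_le_iff_ne_zero, ← Nat.pos_iff_ne_zero, Finset.card_pos]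
  exact ⟨A, Finset.mem_filter.2 ⟨hA, hvA⟩⟩

/-! ### Connectivity -/

lemma adj_inl_inr {v : {v : V // P E v}} {A : {A : Finset V // A ∈ E}} (h : v.1 ∈ A.1) :
    (IG E).Adj (.inl v) (.inr A) := h

lemma reach_aux (k : ℕ) : ∀ (u w : V) (v : Fin (k+1) → V) (A : Fin k → Finset V),
    (∀ i, A i ∈ E) → (∀ i : Fin k, v i.castSucc ∈ A i ∧ v i.succ ∈ A i) →
    v 0 = u → v (Fin.last k) = w →
    ∀ (h0 : P E u) (hl : P E w),
    (IG E).Reachable (.inl ⟨u, h0⟩) (.inl ⟨w, hl⟩) := by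
  induction k with
  | zero =>
    intro u w v A _ _ hu hw h0 hl
    have : u = w := by rw [← hu, ← hw]; rfl
    subst this
    rfl
  | succ k ih =>
    intro u w v A hE hmem hu hw h0 hl
    have h00 : v 0 ∈ A 0 := by simpa using (hmem 0).1
    have h01 : v 1 ∈ A 0 := by simpa using (hmem 0).2
    have hP1 : P E (v 1) := ⟨A 0, hE 0, h01⟩
    have r1 : (IG E).Reachable (.inl ⟨u, h0⟩) (.inl ⟨v 1, hP1⟩) := by
      have s1 : (IG E).Adj (.inl ⟨u, h0⟩) (.inr ⟨A 0, hE 0⟩) :=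
        adj_inl_inr E (by rw [hu] at h00; exact h00)
      have s2 : (IG E).Adj (.inr ⟨A 0, hE 0⟩) (.inl ⟨v 1, hP1⟩) :=
        (adj_inl_inr E h01).symm
      exact (s1.reachable).trans s2.reachable
    refine r1.trans (ih (v 1) w (v ∘ Fin.succ) (A ∘ Fin.succ) (fun i => hE i.succ) ?_ rfl ?_ hP1 hl)
    · intro i
      constructor
      · have := (hmem i.succ).1
        exact this
      · exact (hmem i.succ).2
    · simp [Function.comp, Fin.succ_last, hw]

lemma reach_inl (hconn : PathConn V E) (u w : V) (h0 : P E u) (hl : P E w) :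
    (IG E).Reachable (.inl ⟨u, h0⟩) (.inl ⟨w, hl⟩) := by
  obtain ⟨k, v, A, _, _, hE, hu, hw, hmem⟩ := hconn u w
  exact reach_aux E k u w v A hE hmem hu hw h0 hl

lemma IG_connected (hne : ∀ A ∈ E, A.Nonempty) (hconn : PathConn V E) (hE : E.Nonempty) :
    (IG E).Connected := by
  have hnW : Nonempty (W E) := ⟨.inr ⟨hE.choose, hE.choose_spec⟩⟩
  rw [connected_iff]
  refine ⟨?_, hnW⟩
  have toedge : ∀ (u : {v : V // P E v}) (A : {A : Finset V // A ∈ E}),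
      (IG E).Reachable (.inl u) (.inr A) := by
    intro u A
    obtain ⟨a, ha⟩ := hne A.1 A.2
    have hPa : P E a := ⟨A.1, A.2, ha⟩
    exact (reach_inl E hconn u.1 a u.2 hPa).trans (Adj.reachable (adj_inl_inr E ha))
  rintro (u|A) (w|B)
  · exact reach_inl E hconn u.1 w.1 u.2 w.2
  · exact toedge u B
  · exact (toedge w A).symm
  · obtain ⟨a, ha⟩ := hne A.1 A.2
    have hPa : P E a := ⟨A.1, A.2, ha⟩
    exact ((Adj.reachable (adj_inl_inr E (v := ⟨a, hPa⟩) ha)).symm).trans (toedge ⟨a, hPa⟩ B)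

/-! ### Acyclicity -/

lemma walk_parity {x y : W E} (p : (IG E).Walk x y) :
    ∀ i, i ≤ p.length → ((p.getVert i).isLeft = x.isLeft ↔ i % 2 = 0) := by
  intro i
  induction i with
  | zero => intro _; simp
  | succ i ih =>
    intro h
    have hadj := p.adj_getVert_succ (by omega : i < p.length)
    have hflip := adj_isLeft E hadj
    have hih := ih (by omega)
    rw [hflip]
    cases hb : (p.getVert i).isLeft <;> cases hcx : x.isLeft <;>
      simp_all <;> omega

/-- junk-valued projections -/
noncomputable def sV [Nonempty V] : W E → V := Sum.elim Subtype.val (fun _ => Classical.arbitrary V)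
def sE : W E → Finset V := Sum.elim (fun _ => (∅ : Finset V)) Subtype.val

lemma eq_inl_of_isLeft [Nonempty V] {x : W E} (h : x.isLeft = true) :
    ∃ hp : P E (sV E x), x = .inl ⟨sV E x, hp⟩ := by
  rcases x with v | A
  · exact ⟨v.2, rfl⟩
  · simp at h

lemma eq_inr_of_isRight [Nonempty V] {x : W E} (h : x.isLeft = false) :
    ∃ hp : sE E x ∈ E, x = .inr ⟨sE E x, hp⟩ := by
  rcases x with v | A
  · simp at h
  · exact ⟨A.2, rfl⟩

lemma no_cycle_at_inl [Nonempty V] (hcf : ¬HasSimpleCycle E) (v₀ : {v : V // P E v})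
    (c : (IG E).Walk (.inl v₀) (.inl v₀)) : ¬ c.IsCycle := by
  intro hc
  set n := c.length with hn
  have hn3 : 3 ≤ n := hc.three_le_length
  have hpar : ∀ i ≤ n, ((c.getVert i).isLeft = true ↔ i % 2 = 0) := by
    intro i hi
    have := walk_parity E c i hi
    simpa using this
  have hlast : c.getVert n = .inl v₀ := c.getVert_length
  have hzero : c.getVert 0 = .inl v₀ := c.getVert_zero
  have hneven : n % 2 = 0 := (hpar n le_rfl).1 (by rw [hlast]; rfl)
  set k := n / 2 with hk
  have hnk : n = 2 * k := by omega
  have hk2 : 2 ≤ k := by omega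
  -- the vertex and edge sequences
  set vv : Fin k → V := fun i => sV E (c.getVert (2 * i.val)) with hvv
  set AA : Fin k → Finset V := fun i => sE E (c.getVert (2 * i.val + 1)) with hAA
  have hinlI : ∀ i : Fin k, ∃ hp : P E (vv i),
      c.getVert (2 * i.val) = .inl ⟨vv i, hp⟩ := by
    intro i
    exact eq_inl_of_isLeft E ((hpar (2 * i.val) (by omega)).2 (by omega))
  have hinrI : ∀ i : Fin k, ∃ hp : AA i ∈ E,
      c.getVert (2 * i.val + 1) = .inr ⟨AA i, hp⟩ := by
    intro i
    have hle : 2 * i.val + 1 ≤ n := by have := i.2; omega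
    have : (c.getVert (2 * i.val + 1)).isLeft = false := by
      by_contra h
      have h' : (c.getVert (2 * i.val + 1)).isLeft = true := by
        cases h2 : (c.getVert (2 * i.val + 1)).isLeft
        · exact absurd h2 h
        · rfl
      have := (hpar (2 * i.val + 1) hle).1 h'
      omega
    exact eq_inr_of_isRight E this
  -- wrap-around identity
  have hwrap : ∀ i : Fin k, c.getVert (2 * i.val + 2) = c.getVert (2 * ((i.val + 1) % k)) := by
    intro i
    rcases Nat.lt_or_ge (i.val + 1) k with h | h
    · have he : 2 * ((i.val + 1) % k) = 2 * i.val + 2 := by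
        rw [Nat.mod_eq_of_lt h]; omega
      rw [he]
    · have hik : i.val + 1 = k := by have := i.2; omega
      have h0 : (i.val + 1) % k = 0 := by rw [hik, Nat.mod_self]
      have h2 : 2 * i.val + 2 = n := by omega
      rw [h0, Nat.mul_zero, hzero, h2, hlast]
  -- memberships
  have hmem1 : ∀ i : Fin k, vv i ∈ AA i := by
    intro i
    have hadj := c.adj_getVert_succ (by have := i.2; omega : 2 * i.val < n)
    obtain ⟨hp1, e1⟩ := hinlI i
    obtain ⟨hp2, e2⟩ := hinrI i
    rw [e1, e2] at hadj
    exact hadj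
  have hmem2 : ∀ i : Fin k,
      vv ⟨(i.val + 1) % k, Nat.mod_lt _ (by omega)⟩ ∈ AA i := by
    intro i
    have hadj := c.adj_getVert_succ (by have := i.2; omega : 2 * i.val + 1 < n)
    obtain ⟨hp2, e2⟩ := hinrI i
    set j : Fin k := ⟨(i.val + 1) % k, Nat.mod_lt _ (by omega)⟩ with hj
    obtain ⟨hp3, e3⟩ := hinlI j
    have : c.getVert (2 * i.val + 1 + 1) = .inl ⟨vv j, hp3⟩ := by
      have h4 : 2 * i.val + 1 + 1 = 2 * i.val + 2 := by omega
      rw [h4, hwrap i]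
      exact e3
    rw [e2, this] at hadj
    exact hadj
  -- injectivity of vv
  have hinjv : Function.Injective vv := by
    intro i j h
    obtain ⟨hp1, e1⟩ := hinlI i
    obtain ⟨hp2, e2⟩ := hinlI j
    have hg : c.getVert (2 * i.val) = c.getVert (2 * j.val) := by
      rw [e1, e2]
      exact congrArg Sum.inl (Subtype.ext h)
    rcases Nat.eq_zero_or_pos i.val with hi0 | hi0 <;>
      rcases Nat.eq_zero_or_pos j.val with hj0 | hj0
    · exact Fin.ext (by omega)
    · exfalso
      rw [hi0] at hg
      simp only [Nat.mul_zero] at hg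
      rw [hzero] at hg
      have hg' : c.getVert n = c.getVert (2 * j.val) := by rw [hlast]; exact hg
      have := cycle_getVert_inj hc (by omega) le_rfl (by omega)
        (by have := j.2; omega : 2 * j.val ≤ n) hg'
      have := j.2; omega
    · exfalso
      rw [hj0] at hg
      simp only [Nat.mul_zero] at hg
      rw [hzero] at hg
      have hg' : c.getVert n = c.getVert (2 * i.val) := by rw [hlast]; exact hg.symm
      have := cycle_getVert_inj hc (by omega) le_rfl (by omega)
        (by have := i.2; omega : 2 * i.val ≤ n) hg'
      have := i.2; omega
    · have := cycle_getVert_inj hc (by omega) (by have := i.2; omega : 2 * i.val ≤ n)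
        (by omega) (by have := j.2; omega : 2 * j.val ≤ n) hg
      exact Fin.ext (by omega)
  -- injectivity of AA
  have hinjA : Function.Injective AA := by
    intro i j h
    obtain ⟨hp1, e1⟩ := hinrI i
    obtain ⟨hp2, e2⟩ := hinrI j
    have hg : c.getVert (2 * i.val + 1) = c.getVert (2 * j.val + 1) := by
      rw [e1, e2]
      exact congrArg Sum.inr (Subtype.ext h)
    have := cycle_getVert_inj hc (by omega) (by have := i.2; omega : 2 * i.val + 1 ≤ n)
      (by omega) (by have := j.2; omega : 2 * j.val + 1 ≤ n) hg
    exact Fin.ext (by omega)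
  exact hcf ⟨k, hk2, vv, AA, hinjv, hinjA, fun i => (hinrI i).choose,
    fun i => ⟨hmem1 i, hmem2 i⟩⟩

lemma IG_acyclic [Nonempty V] (hcf : ¬HasSimpleCycle E) : (IG E).IsAcyclic := by
  rintro (v₀ | A₀) c hc
  · exact no_cycle_at_inl E hcf v₀ c hc
  · have hlen : 0 < c.length := by have := hc.three_le_length; omega
    have hadj := c.adj_getVert_succ hlen
    rw [c.getVert_zero] at hadj
    have hleft : (c.getVert 1).isLeft = true := by
      rcases hx : c.getVert 1 with w | B
      · rfl
      · rw [hx] at hadj; exact absurd hadj id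
    obtain ⟨hp, hx⟩ := eq_inl_of_isLeft E hleft
    have hmem : c.getVert 1 ∈ c.support :=
      Walk.mem_support_iff_exists_getVert.2 ⟨1, rfl, by omega⟩
    exact no_cycle_at_inl E hcf _ (((c.rotate _ hmem)).copy hx hx)
      ((Walk.isCycle_copy _ hx).2 (hc.rotate hmem))

end Stmt5Aux

theorem stmt_5 {V : Type*} [Fintype V] [DecidableEq V] (E : Finset (Finset V))
    (hne : ∀ A ∈ E, A.Nonempty) (hconn : PathConn V E) (hcf : ¬HasSimpleCycle E) :
    ∑ v : V, ((E.filter (fun A => v ∈ A)).card - 1) = E.card - 1 := by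
  classical
  open Stmt5Aux in
  rcases E.eq_empty_or_nonempty with rfl | hE
  · simp
  · have hV : Nonempty V := ⟨(hne hE.choose hE.choose_spec).choose⟩
    have htree : (IG E).IsTree := ⟨IG_connected E hne hconn hE, IG_acyclic E hcf⟩
    have hcard := htree.card_edgeFinset
    have hdeg := (IG E).sum_degrees_eq_twice_card_edges
    have hsub1 : ∑ v ∈ Finset.univ.filter (P E), deg E v
        = ∑ v : {v : V // P E v}, deg E v.1 :=
      Finset.sum_subtype _ (by simp) _
    have hsub2 : ∑ A ∈ E, (fun A => A.card) A
        = ∑ A : {A : Finset V // A ∈ E}, (fun A => A.card) A.1 :=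
      Finset.sum_subtype _ (by simp) _
    have hsum : ∑ x : W E, (IG E).degree x
        = (∑ v : V, deg E v) + (∑ v : V, deg E v) := by
      rw [Fintype.sum_sum_type]
      congr 1
      · rw [← sum_deg_filter E, hsub1]
        exact Finset.sum_congr rfl (fun v _ => degree_inl E v)
      · rw [← double_count E]
        simp only at hsub2
        rw [hsub2]
        exact Finset.sum_congr rfl (fun A _ => degree_inr E A)
    rw [hsum] at hdeg
    simp only [deg] at hdeg
    have hcardW : Fintype.card (W E)
        = (Finset.univ.filter (P E)).card + E.card := by
      rw [Fintype.card_sum, Fintype.card_subtype]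
      congr 1
      exact Fintype.card_coe E
    rw [hcardW] at hcard
    have hlhs := lhs_eq E
    simp only [deg] at hlhs
    rw [hlhs]
    have hE1 : 1 ≤ E.card := Finset.card_pos.2 hE
    omega
end

section
/- Every path-connected, cycle-free hypergraph with at least two hyperedges contains a leaf hyperedge, i.e., a hyperedge A ∈ E such that A intersects the union of all other hyperedges in exactly one vertex. -/
lemma mkCycle {V : Type*} (E : Finset (Finset V)) (k : ℕ) (hk : 2 ≤ k)
    (v : ℕ → V) (A : ℕ → Finset V)
    (hv : ∀ i j, i < k → j < k → v i = v j → i = j)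
    (hA : ∀ i j, i < k → j < k → A i = A j → i = j)
    (hmem : ∀ i, i < k → A i ∈ E)
    (hc : ∀ i, i < k → v i ∈ A i ∧ v ((i + 1) % k) ∈ A i) :
    HasSimpleCycle E := by
  refine ⟨k, hk, fun t => v t.val, fun t => A t.val, ?_, ?_, ?_, ?_⟩
  · exact fun a b h => Fin.ext (hv _ _ a.isLt b.isLt h)
  · exact fun a b h => Fin.ext (hA _ _ a.isLt b.isLt h)
  · exact fun i => hmem _ i.isLt
  · intro i; exact hc i.val i.isLt

lemma attach_nonempty {V : Type*} [DecidableEq V] (E : Finset (Finset V))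
    (hne : ∀ A ∈ E, A.Nonempty) (hconn : PathConn V E) (hE : 2 ≤ E.card)
    {A : Finset V} (hA : A ∈ E) :
    (A ∩ (E.erase A).sup id).Nonempty := by
  obtain ⟨B, hB, hBA⟩ := Finset.exists_mem_ne (s := E) (by omega) A
  obtain ⟨a, ha⟩ := hne A hA
  obtain ⟨b, hb⟩ := hne B hB
  have hBe : B ∈ E.erase A := Finset.mem_erase.mpr ⟨hBA, hB⟩
  by_cases hab : a ∈ B
  · exact ⟨a, Finset.mem_inter.mpr ⟨ha, Finset.mem_sup.mpr ⟨B, hBe, hab⟩⟩⟩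
  obtain ⟨k, v, D, hvinj, hDinj, hDE, hv0, hvl, hstep⟩ := hconn a b
  -- k ≠ 0 since a ≠ b
  have hk0 : k ≠ 0 := by
    rintro rfl
    have : a = b := by
      rw [← hv0, ← hvl]; congr 1
    exact hab (this ▸ hb)
  have hkpos : 0 < k := Nat.pos_of_ne_zero hk0
  set i0 : Fin k := ⟨0, hkpos⟩
  have h0 := hstep i0
  have hv0c : v i0.castSucc = a := by
    rw [← hv0]; congr 1
  by_cases hD0 : D i0 = A
  · -- first edge is A
    by_cases hk1 : k = 1
    · -- b ∈ A, b ∈ B ≠ A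
      have hbl : v i0.succ = b := by
        rw [← hvl]; congr 1
        ext; simp [i0, Fin.last, hk1]
      have : b ∈ A := by rw [← hbl, ← hD0] at *; exact (hstep i0).2
      exact ⟨b, Finset.mem_inter.mpr ⟨this, Finset.mem_sup.mpr ⟨B, hBe, hb⟩⟩⟩
    · -- k ≥ 2 : v 1 ∈ A ∩ D 1
      have hk2 : 2 ≤ k := by omega
      set i1 : Fin k := ⟨1, by omega⟩
      have h1 := hstep i1
      have hsc : i0.succ = i1.castSucc := by ext; simp [i0, i1]
      have hmemA : v i0.succ ∈ A := hD0 ▸ h0.2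
      have hD10 : D i1 ≠ A := by
        rw [← hD0]; intro h
        have := hDinj h
        simp [i0, i1, Fin.ext_iff] at this
      refine ⟨v i0.succ, Finset.mem_inter.mpr ⟨hmemA, Finset.mem_sup.mpr ⟨D i1, Finset.mem_erase.mpr ⟨hD10, hDE i1⟩, ?_⟩⟩⟩
      rw [hsc]; exact h1.1
  · exact ⟨a, Finset.mem_inter.mpr ⟨ha, Finset.mem_sup.mpr ⟨D i0, Finset.mem_erase.mpr ⟨hD0, hDE i0⟩, hv0c ▸ h0.1⟩⟩⟩

lemma chain_exists {V : Type*} [DecidableEq V] (E : Finset (Finset V))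
    (hcf : ¬HasSimpleCycle E) (hEne : E.Nonempty) (hV : ∃ v : V, True)
    (hleaf : ∀ A ∈ E, 2 ≤ (A ∩ (E.erase A).sup id).card) :
    ∀ n : ℕ, ∃ (A : ℕ → Finset V) (x : ℕ → V),
      (∀ i, i ≤ n → A i ∈ E) ∧
      (∀ i j, i ≤ n → j ≤ n → A i = A j → i = j) ∧
      (∀ i j, i < n → j < n → x i = x j → i = j) ∧
      (∀ i, i < n → x i ∈ A i ∧ x i ∈ A (i + 1)) := by
  obtain ⟨v0, -⟩ := hV
  obtain ⟨A0, hA0⟩ := hEne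
  intro n
  induction n with
  | zero =>
    exact ⟨fun _ => A0, fun _ => v0, fun i _ => hA0,
      fun i j hi hj _ => by omega, fun i j hi hj _ => by omega,
      fun i hi => absurd hi (by omega)⟩
  | succ n ih =>
    obtain ⟨A, x, hAE, hAinj, hxinj, hchain⟩ := ih
    set S := A n ∩ (E.erase (A n)).sup id with hS
    have hScard : 2 ≤ S.card := hleaf (A n) (hAE n le_rfl)
    obtain ⟨y, hyS, hyne⟩ := Finset.exists_mem_ne (s := S) (by omega) (x (n - 1))
    have hyAn : y ∈ A n := (Finset.mem_inter.mp hyS).1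
    obtain ⟨B, hBe, hyB'⟩ := Finset.mem_sup.mp (Finset.mem_inter.mp hyS).2
    have hyB : y ∈ B := hyB'
    obtain ⟨hBAn, hBE⟩ := Finset.mem_erase.mp hBe
    -- y is not among the earlier chain vertices
    have hyx : ∀ i, i < n → y ≠ x i := by
      intro i hi hyx
      by_cases hi1 : i = n - 1
      · exact hyne (hi1 ▸ hyx)
      · have hilt : i < n - 1 := by omega
        refine hcf (mkCycle E (n - i) (by omega) (fun t => x (i + t)) (fun t => A (i + 1 + t))
          ?_ ?_ ?_ ?_)
        · intro a b ha hb h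
          have := hxinj (i + a) (i + b) (by omega) (by omega) h
          omega
        · intro a b ha hb h
          have := hAinj (i + 1 + a) (i + 1 + b) (by omega) (by omega) h
          omega
        · intro t ht; exact hAE (i + 1 + t) (by omega)
        · intro t ht
          constructor
          · show x (i + t) ∈ A (i + 1 + t)
            have h1 : i + 1 + t = (i + t) + 1 := by omega
            rw [h1]
            exact (hchain (i + t) (by omega)).2
          · by_cases htk : t + 1 < n - i
            · rw [Nat.mod_eq_of_lt htk]
              show x (i + (t + 1)) ∈ A (i + 1 + t)
              have h1 : i + 1 + t = i + (t + 1) := by omega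
              rw [h1]
              exact (hchain (i + (t + 1)) (by omega)).1
            · have ht1 : t + 1 = n - i := by omega
              rw [ht1, Nat.mod_self]
              show x (i + 0) ∈ A (i + 1 + t)
              have hn : i + 1 + t = n := by omega
              rw [hn, Nat.add_zero]
              exact hyx ▸ hyAn
    -- B is not among the earlier chain edges
    have hBA : ∀ j, j ≤ n → B ≠ A j := by
      intro j hj hBj
      have hjn : j < n := by
        rcases Nat.lt_or_ge j n with h | h
        · exact h
        · exact absurd (by rw [hBj]; congr 1; omega) hBAn
      refine hcf (mkCycle E (n - j + 1) (by omega)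
        (fun t => if t = n - j then y else x (j + t))
        (fun t => if t = n - j then A j else A (j + 1 + t)) ?_ ?_ ?_ ?_)
      · intro a b ha hb h
        have h' : (if a = n - j then y else x (j + a)) = (if b = n - j then y else x (j + b)) := h
        rcases eq_or_ne a (n - j) with hae | hae <;> rcases eq_or_ne b (n - j) with hbe | hbe
        · omega
        · rw [if_pos hae, if_neg hbe] at h'
          exact absurd h' (hyx (j + b) (by omega))
        · rw [if_neg hae, if_pos hbe] at h'
          exact absurd h'.symm (hyx (j + a) (by omega))
        · rw [if_neg hae, if_neg hbe] at h'
          have := hxinj (j + a) (j + b) (by omega) (by omega) h'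
          omega
      · intro a b ha hb h
        have h' : (if a = n - j then A j else A (j + 1 + a)) =
            (if b = n - j then A j else A (j + 1 + b)) := h
        rcases eq_or_ne a (n - j) with hae | hae <;> rcases eq_or_ne b (n - j) with hbe | hbe
        · omega
        · rw [if_pos hae, if_neg hbe] at h'
          have := hAinj j (j + 1 + b) (by omega) (by omega) h'
          omega
        · rw [if_neg hae, if_pos hbe] at h'
          have := hAinj (j + 1 + a) j (by omega) (by omega) h'
          omega
        · rw [if_neg hae, if_neg hbe] at h'
          have := hAinj (j + 1 + a) (j + 1 + b) (by omega) (by omega) h'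
          omega
      · intro t ht
        show (if t = n - j then A j else A (j + 1 + t)) ∈ E
        rcases eq_or_ne t (n - j) with hte | hte
        · rw [if_pos hte]; exact hAE j (by omega)
        · rw [if_neg hte]; exact hAE (j + 1 + t) (by omega)
      · intro t ht
        rcases eq_or_ne t (n - j) with hte | hte
        · constructor
          · show (if t = n - j then y else x (j + t)) ∈ (if t = n - j then A j else A (j + 1 + t))
            rw [if_pos hte, if_pos hte, ← hBj]
            exact hyB
          · have hm : (t + 1) % (n - j + 1) = 0 := by rw [hte]; exact Nat.mod_self _
            show (if (t + 1) % (n - j + 1) = n - j then y else x (j + (t + 1) % (n - j + 1))) ∈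
              (if t = n - j then A j else A (j + 1 + t))
            rw [hm, if_pos hte, if_neg (show ¬(0 = n - j) by omega), Nat.add_zero]
            exact (hchain j hjn).1
        · have htlt : t < n - j := by omega
          constructor
          · show (if t = n - j then y else x (j + t)) ∈ (if t = n - j then A j else A (j + 1 + t))
            rw [if_neg hte, if_neg hte]
            have h1 : j + 1 + t = (j + t) + 1 := by omega
            rw [h1]
            exact (hchain (j + t) (by omega)).2
          · have hm : (t + 1) % (n - j + 1) = t + 1 := Nat.mod_eq_of_lt (by omega)
            show (if (t + 1) % (n - j + 1) = n - j then y else x (j + (t + 1) % (n - j + 1))) ∈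
              (if t = n - j then A j else A (j + 1 + t))
            rw [hm, if_neg hte]
            by_cases ht1 : t + 1 = n - j
            · rw [if_pos ht1]
              have h1 : j + 1 + t = n := by omega
              rw [h1]
              exact hyAn
            · rw [if_neg ht1]
              have h1 : j + 1 + t = j + (t + 1) := by omega
              rw [h1]
              exact (hchain (j + (t + 1)) (by omega)).1
    -- extend the chain
    refine ⟨fun m => if m ≤ n then A m else B, fun m => if m < n then x m else y,
      ?_, ?_, ?_, ?_⟩
    · intro i hi
      show (if i ≤ n then A i else B) ∈ E
      rcases le_or_gt i n with h | h
      · rw [if_pos h]; exact hAE i h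
      · rw [if_neg (by omega : ¬ i ≤ n)]; exact hBE
    · intro i j hi hj h
      have h' : (if i ≤ n then A i else B) = (if j ≤ n then A j else B) := h
      rcases le_or_gt i n with h1 | h1 <;> rcases le_or_gt j n with h2 | h2
      · rw [if_pos h1, if_pos h2] at h'
        exact hAinj i j h1 h2 h'
      · rw [if_pos h1, if_neg (by omega)] at h'
        exact absurd h'.symm (hBA i h1)
      · rw [if_neg (by omega), if_pos h2] at h'
        exact absurd h' (hBA j h2)
      · omega
    · intro i j hi hj h
      have h' : (if i < n then x i else y) = (if j < n then x j else y) := h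
      rcases lt_or_ge i n with h1 | h1 <;> rcases lt_or_ge j n with h2 | h2
      · rw [if_pos h1, if_pos h2] at h'
        exact hxinj i j h1 h2 h'
      · rw [if_pos h1, if_neg (by omega)] at h'
        exact absurd h'.symm (hyx i h1)
      · rw [if_neg (by omega), if_pos h2] at h'
        exact absurd h' (hyx j h2)
      · omega
    · intro i hi
      rcases lt_or_ge i n with h1 | h1
      · constructor
        · show (if i < n then x i else y) ∈ (if i ≤ n then A i else B)
          rw [if_pos h1, if_pos (by omega : i ≤ n)]
          exact (hchain i h1).1
        · show (if i < n then x i else y) ∈ (if i + 1 ≤ n then A (i + 1) else B)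
          rcases le_or_gt (i + 1) n with h2 | h2
          · rw [if_pos h1, if_pos h2]
            exact (hchain i h1).2
          · exact absurd h1 (by omega)
      · have hin : i = n := by omega
        constructor
        · show (if i < n then x i else y) ∈ (if i ≤ n then A i else B)
          rw [hin, if_neg (lt_irrefl n), if_pos le_rfl]
          exact hyAn
        · show (if i < n then x i else y) ∈ (if i + 1 ≤ n then A (i + 1) else B)
          rw [hin, if_neg (lt_irrefl n), if_neg (by omega : ¬ n + 1 ≤ n)]
          exact hyB

theorem stmt_7 {V : Type*} [Fintype V] [DecidableEq V] (E : Finset (Finset V))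
    (hne : ∀ A ∈ E, A.Nonempty) (hconn : PathConn V E) (hcf : ¬HasSimpleCycle E)
    (hE : 2 ≤ E.card) :
    ∃ A ∈ E, (A ∩ (E.erase A).sup id).card = 1 := by
  by_contra hcon
  push_neg at hcon
  have hleaf : ∀ A ∈ E, 2 ≤ (A ∩ (E.erase A).sup id).card := by
    intro A hA
    have h1 := attach_nonempty E hne hconn hE hA
    have h2 := hcon A hA
    have h3 := Finset.card_pos.mpr h1
    omega
  have hEne : E.Nonempty := Finset.card_pos.mp (by omega)
  have hV : ∃ v : V, True := by
    obtain ⟨A0, hA0⟩ := hEne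
    obtain ⟨v, -⟩ := hne A0 hA0
    exact ⟨v, trivial⟩
  obtain ⟨A, x, hAE, hAinj, -, -⟩ := chain_exists E hcf hEne hV hleaf E.card
  have hle : (Finset.range (E.card + 1)).card ≤ E.card := by
    apply Finset.card_le_card_of_injOn A
    · intro i hi
      exact hAE i (Nat.lt_succ_iff.mp (Finset.mem_range.mp hi))
    · intro i hi j hj h
      exact hAinj i j (Nat.lt_succ_iff.mp (Finset.mem_range.mp hi))
        (Nat.lt_succ_iff.mp (Finset.mem_range.mp hj)) h
  simp [Finset.card_range] at hle
end

section
/- Let M = (M_1, M_2, ..., M_T) be a message generated deterministically from random variables R_1,...,R_n via a blackboard communication protocol: at each round j there exists an index i*(j), a deterministic function of the prefix M^{j-1} = (M_1,...,M_{j-1}), such that M_j is a deterministic function of (R_{i*(j)}, M^{j-1}). Then the sum over i from 1 to n of H(M | R_i) is at most (n-1)·H(M). -/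
/-- Probability that the random variable `X` (on finite outcome space `Ω`
with probability mass function `p`) takes the value `a`. -/
noncomputable def pmass {Ω α : Type*} [Fintype Ω] [DecidableEq α]
    (p : Ω → ℝ) (X : Ω → α) (a : α) : ℝ :=
  ∑ ω, if X ω = a then p ω else 0

/-- Shannon entropy (in bits) of a finitely valued random variable. -/
noncomputable def ent {Ω α : Type*} [Fintype Ω] [Fintype α] [DecidableEq α]
    (p : Ω → ℝ) (X : Ω → α) : ℝ :=
  ∑ a, -(pmass p X a * Real.logb 2 (pmass p X a))

/-- Conditional Shannon entropy `H(X | Y) = H(X, Y) - H(Y)`. -/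
noncomputable def condEnt {Ω α β : Type*} [Fintype Ω] [Fintype α] [Fintype β]
    [DecidableEq α] [DecidableEq β] (p : Ω → ℝ) (X : Ω → α) (Y : Ω → β) : ℝ :=
  ent p (fun ω => (X ω, Y ω)) - ent p Y

/-- `p` is a probability mass function on `Ω`. -/
def IsProb {Ω : Type*} [Fintype Ω] (p : Ω → ℝ) : Prop :=
  (∀ ω, 0 ≤ p ω) ∧ ∑ ω, p ω = 1

open Finset Real

set_option linter.unusedSectionVars false
namespace Stmt8

variable {Ω : Type*} [Fintype Ω]

lemma pmass_nonneg {α} [DecidableEq α] {q : Ω → ℝ} (hq : ∀ ω, 0 ≤ q ω) (X : Ω → α) (a : α) :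
    0 ≤ pmass q X a :=
  Finset.sum_nonneg fun ω _ => by by_cases h : X ω = a <;> simp [h, hq ω]

lemma pmass_congr {α β} [DecidableEq α] [DecidableEq β] (q : Ω → ℝ) {X : Ω → α} {Y : Ω → β}
    {a : α} {b : β} (h : ∀ ω, X ω = a ↔ Y ω = b) : pmass q X a = pmass q Y b :=
  Finset.sum_congr rfl fun ω _ => by rw [if_congr (h ω) rfl rfl]

lemma sum_pmass {α} [Fintype α] [DecidableEq α] (q : Ω → ℝ) (X : Ω → α) :
    ∑ a, pmass q X a = ∑ ω, q ω := by
  unfold pmass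
  rw [Finset.sum_comm]
  refine Finset.sum_congr rfl fun ω _ => ?_
  simp [Finset.sum_ite_eq]

lemma pmass_fst {α β} [Fintype α] [DecidableEq α] [DecidableEq β] (q : Ω → ℝ)
    (X : Ω → α) (Y : Ω → β) (b : β) :
    ∑ a, pmass q (fun ω => (X ω, Y ω)) (a, b) = pmass q Y b := by
  unfold pmass
  rw [Finset.sum_comm]
  refine Finset.sum_congr rfl fun ω _ => ?_
  by_cases h : Y ω = b <;> simp [Prod.ext_iff, h, Finset.sum_ite_eq]

lemma pmass_snd {α β} [Fintype β] [DecidableEq α] [DecidableEq β] (q : Ω → ℝ)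
    (X : Ω → α) (Y : Ω → β) (a : α) :
    ∑ b, pmass q (fun ω => (X ω, Y ω)) (a, b) = pmass q X a := by
  unfold pmass
  rw [Finset.sum_comm]
  refine Finset.sum_congr rfl fun ω _ => ?_
  by_cases h : X ω = a <;> simp [Prod.ext_iff, h, Finset.sum_ite_eq]

lemma pmass_pair_le_snd {α β} [Fintype α] [DecidableEq α] [DecidableEq β] {q : Ω → ℝ}
    (hq : ∀ ω, 0 ≤ q ω) (X : Ω → α) (Y : Ω → β) (a : α) (b : β) :
    pmass q (fun ω => (X ω, Y ω)) (a, b) ≤ pmass q Y b := by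
  rw [← pmass_fst q X Y b]
  exact Finset.single_le_sum (fun a' _ => pmass_nonneg hq (fun ω => (X ω, Y ω)) (a', b)) (Finset.mem_univ a)

lemma pmass_pair_le_fst {α β} [Fintype β] [DecidableEq α] [DecidableEq β] {q : Ω → ℝ}
    (hq : ∀ ω, 0 ≤ q ω) (X : Ω → α) (Y : Ω → β) (a : α) (b : β) :
    pmass q (fun ω => (X ω, Y ω)) (a, b) ≤ pmass q X a := by
  rw [← pmass_snd q X Y a]
  exact Finset.single_le_sum (fun b' _ => pmass_nonneg hq (fun ω => (X ω, Y ω)) (a, b')) (Finset.mem_univ b)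

lemma pmass_le_total {α} [Fintype α] [DecidableEq α] {q : Ω → ℝ}
    (hq : ∀ ω, 0 ≤ q ω) (X : Ω → α) (a : α) :
    pmass q X a ≤ ∑ ω, q ω := by
  rw [← sum_pmass q X]
  exact Finset.single_le_sum (fun a' _ => pmass_nonneg hq X a') (Finset.mem_univ a)

/-- log-sum inequality with natural log. -/
lemma logsum_log {ι : Type*} (s : Finset ι) (a b : ι → ℝ)
    (ha : ∀ i ∈ s, 0 ≤ a i) (hb : ∀ i ∈ s, 0 ≤ b i)
    (hab : ∀ i ∈ s, a i ≠ 0 → b i ≠ 0) :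
    ∑ i ∈ s, a i * Real.log (b i / a i) ≤
      (∑ i ∈ s, a i) * Real.log ((∑ i ∈ s, b i) / (∑ i ∈ s, a i)) := by
  set A := ∑ i ∈ s, a i with hA
  rcases eq_or_lt_of_le (Finset.sum_nonneg ha) with h0 | hpos
  · have : ∀ i ∈ s, a i = 0 := by
      intro i hi
      exact (Finset.sum_eq_zero_iff_of_nonneg ha).1 h0.symm i hi
    have hz : ∑ i ∈ s, a i * Real.log (b i / a i) = 0 :=
      Finset.sum_eq_zero fun i hi => by rw [this i hi, zero_mul]
    rw [hz, hA, ← h0]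
    simp
  · set s' := s.filter (fun i => a i ≠ 0) with hs'
    have hsub : s' ⊆ s := Finset.filter_subset _ _
    have hapos : ∀ i ∈ s', 0 < a i := by
      intro i hi
      rw [hs', Finset.mem_filter] at hi
      exact lt_of_le_of_ne (ha i hi.1) (Ne.symm hi.2)
    have hbpos : ∀ i ∈ s', 0 < b i := by
      intro i hi
      rw [hs', Finset.mem_filter] at hi
      exact lt_of_le_of_ne (hb i hi.1) (Ne.symm (hab i hi.1 hi.2))
    have hAeq : ∑ i ∈ s', a i = A := by
      rw [hs', hA]
      exact Finset.sum_filter_ne_zero s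
    have hLHS : ∑ i ∈ s, a i * Real.log (b i / a i) = ∑ i ∈ s', a i * Real.log (b i / a i) := by
      rw [hs']
      refine (Finset.sum_filter_of_ne ?_).symm
      intro i _ h
      intro hai
      exact h (by rw [hai, zero_mul])
    have hs'ne : s'.Nonempty := by
      by_contra hne
      rw [Finset.not_nonempty_iff_eq_empty] at hne
      rw [hne, Finset.sum_empty] at hAeq
      exact absurd hAeq.symm (ne_of_gt hpos)
    -- Jensen
    have hjen := (strictConcaveOn_log_Ioi.concaveOn).le_map_sum
      (t := s') (w := fun i => a i / A) (p := fun i => b i / a i)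
      (fun i hi => div_nonneg (hapos i hi).le hpos.le)
      (by rw [← Finset.sum_div, hAeq, div_self (ne_of_gt hpos)])
      (fun i hi => Set.mem_Ioi.2 (div_pos (hbpos i hi) (hapos i hi)))
    simp only [smul_eq_mul] at hjen
    have hx : ∑ i ∈ s', a i / A * (b i / a i) = (∑ i ∈ s', b i) / A := by
      rw [Finset.sum_div]
      refine Finset.sum_congr rfl fun i hi => ?_
      rw [div_mul_div_comm, mul_comm (a i) (b i), mul_div_mul_right _ _ (hapos i hi).ne']
    rw [hx] at hjen
    have hBpos : 0 < ∑ i ∈ s', b i := by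
      obtain ⟨i0, hi0⟩ := hs'ne
      exact Finset.sum_pos' (fun i hi => (hbpos i hi).le) ⟨i0, hi0, hbpos i0 hi0⟩
    have hmono : Real.log ((∑ i ∈ s', b i) / A) ≤ Real.log ((∑ i ∈ s, b i) / A) := by
      refine Real.log_le_log (div_pos hBpos hpos) ?_
      have hss : ∑ i ∈ s', b i ≤ ∑ i ∈ s, b i :=
        Finset.sum_le_sum_of_subset_of_nonneg hsub (fun i hi _ => hb i hi)
      gcongr
    calc ∑ i ∈ s, a i * Real.log (b i / a i)
        = ∑ i ∈ s', a i * Real.log (b i / a i) := hLHS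
      _ = A * ∑ i ∈ s', a i / A * Real.log (b i / a i) := by
          rw [Finset.mul_sum]
          refine Finset.sum_congr rfl fun i hi => ?_
          rw [← mul_assoc, mul_div_cancel₀ _ (ne_of_gt hpos)]
      _ ≤ A * Real.log ((∑ i ∈ s', b i) / A) :=
          mul_le_mul_of_nonneg_left hjen hpos.le
      _ ≤ A * Real.log ((∑ i ∈ s, b i) / A) :=
          mul_le_mul_of_nonneg_left hmono hpos.le


lemma logsum {ι : Type*} (s : Finset ι) (a b : ι → ℝ)
    (ha : ∀ i ∈ s, 0 ≤ a i) (hb : ∀ i ∈ s, 0 ≤ b i)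
    (hab : ∀ i ∈ s, a i ≠ 0 → b i ≠ 0) :
    ∑ i ∈ s, a i * Real.logb 2 (b i / a i) ≤
      (∑ i ∈ s, a i) * Real.logb 2 ((∑ i ∈ s, b i) / (∑ i ∈ s, a i)) := by
  have h2 : (0:ℝ) < Real.log 2 := Real.log_pos (by norm_num)
  have key := logsum_log s a b ha hb hab
  unfold Real.logb
  have e1 : ∑ i ∈ s, a i * (Real.log (b i / a i) / Real.log 2)
      = (∑ i ∈ s, a i * Real.log (b i / a i)) / Real.log 2 := by
    rw [Finset.sum_div]
    exact Finset.sum_congr rfl fun i _ => (mul_div_assoc _ _ _).symm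
  rw [e1, ← mul_div_assoc]
  exact div_le_div_of_nonneg_right key h2.le

variable {α β γ : Type*} [Fintype α] [Fintype β] [Fintype γ]
  [DecidableEq α] [DecidableEq β] [DecidableEq γ]

/-- unnormalized conditional entropy -/
noncomputable def ceu (q : Ω → ℝ) (X : Ω → α) (Y : Ω → β) : ℝ :=
  ∑ a, ∑ b, pmass q (fun ω => (X ω, Y ω)) (a, b) *
    Real.logb 2 (pmass q Y b / pmass q (fun ω => (X ω, Y ω)) (a, b))

noncomputable def eu (q : Ω → ℝ) (X : Ω → α) : ℝ :=
  ∑ a, pmass q X a * Real.logb 2 ((∑ ω, q ω) / pmass q X a)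

lemma ent_comp_injective (q : Ω → ℝ) {g : α → β} (hg : Function.Injective g) (X : Ω → α) :
    ent q (fun ω => g (X ω)) = ent q X := by
  unfold ent
  have hout : ∀ b ∈ (Finset.univ : Finset β), b ∉ Finset.univ.image g →
      -(pmass q (fun ω => g (X ω)) b * Real.logb 2 (pmass q (fun ω => g (X ω)) b)) = 0 := by
    intro b _ hb
    have : pmass q (fun ω => g (X ω)) b = 0 := by
      unfold pmass
      refine Finset.sum_eq_zero fun ω _ => ?_
      rw [if_neg]
      intro h
      exact hb (Finset.mem_image.2 ⟨X ω, Finset.mem_univ _, h⟩)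
    rw [this]; simp
  rw [← Finset.sum_subset (Finset.subset_univ (Finset.univ.image g)) hout,
    Finset.sum_image (fun x _ y _ h => hg h)]
  refine Finset.sum_congr rfl fun a _ => ?_
  have : pmass q (fun ω => g (X ω)) (g a) = pmass q X a :=
    pmass_congr q fun ω => ⟨fun h => hg h, fun h => by rw [h]⟩
  rw [this]

/-- conditional entropy as a relative-entropy-style sum (Lemma A). -/
lemma condEnt_eq_ceu {q : Ω → ℝ} (hq : ∀ ω, 0 ≤ q ω) (X : Ω → α) (Y : Ω → β) :
    ent q (fun ω => (X ω, Y ω)) - ent q Y = ceu q X Y := by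
  unfold ent ceu
  rw [Fintype.sum_prod_type]
  have hY : ∑ b, -(pmass q Y b * Real.logb 2 (pmass q Y b))
      = ∑ a, ∑ b, -(pmass q (fun ω => (X ω, Y ω)) (a, b) * Real.logb 2 (pmass q Y b)) := by
    rw [Finset.sum_comm]
    refine Finset.sum_congr rfl fun b _ => ?_
    have : ∑ a, -(pmass q (fun ω => (X ω, Y ω)) (a, b) * Real.logb 2 (pmass q Y b))
        = -((∑ a, pmass q (fun ω => (X ω, Y ω)) (a, b)) * Real.logb 2 (pmass q Y b)) := by
      rw [Finset.sum_neg_distrib, Finset.sum_mul]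
    rw [this, pmass_fst]
  rw [hY, ← Finset.sum_sub_distrib]
  refine Finset.sum_congr rfl fun a _ => ?_
  rw [← Finset.sum_sub_distrib]
  refine Finset.sum_congr rfl fun b _ => ?_
  set J := pmass q (fun ω => (X ω, Y ω)) (a, b) with hJ
  set B := pmass q Y b with hB
  rcases eq_or_ne J 0 with h | h
  · rw [h]; simp
  · have hJB : J ≤ B := pmass_pair_le_snd hq X Y a b
    have hBne : B ≠ 0 :=
      fun hB0 => h (le_antisymm (hB0 ▸ hJB) (pmass_nonneg hq _ _))
    rw [Real.logb_div hBne h]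
    ring

lemma ceu_comp_injective {q : Ω → ℝ} (hq : ∀ ω, 0 ≤ q ω) (X : Ω → α)
    {g : β → γ} (hg : Function.Injective g) (Y : Ω → β) :
    ceu q X (fun ω => g (Y ω)) = ceu q X Y := by
  rw [← condEnt_eq_ceu hq X (fun ω => g (Y ω)), ← condEnt_eq_ceu hq X Y]
  have h1 : ent q (fun ω => (X ω, g (Y ω))) = ent q (fun ω => (X ω, Y ω)) :=
    ent_comp_injective q (Function.Injective.prodMap Function.injective_id hg)
      (fun ω => (X ω, Y ω))
  have h2 : ent q (fun ω => g (Y ω)) = ent q Y := ent_comp_injective q hg Y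
  rw [h1, h2]


/-- restriction of a weight function to the event `Z = z`. -/
noncomputable def res (q : Ω → ℝ) (Z : Ω → γ) (z : γ) : Ω → ℝ :=
  fun ω => if Z ω = z then q ω else 0

lemma res_nonneg {q : Ω → ℝ} (hq : ∀ ω, 0 ≤ q ω) (Z : Ω → γ) (z : γ) (ω : Ω) :
    0 ≤ res q Z z ω := by
  unfold res; split <;> simp [hq ω]

lemma pmass_res (q : Ω → ℝ) (Z : Ω → γ) (z : γ) (W : Ω → α) (w : α) :
    pmass (res q Z z) W w = pmass q (fun ω => (W ω, Z ω)) (w, z) := by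
  unfold pmass res
  refine Finset.sum_congr rfl fun ω _ => ?_
  simp [Prod.ext_iff, ite_and]

lemma sum_res (q : Ω → ℝ) (Z : Ω → γ) (z : γ) :
    ∑ ω, res q Z z ω = pmass q Z z := rfl

lemma ceu_decomp (q : Ω → ℝ) (X : Ω → α) (Y : Ω → β) (Z : Ω → γ) :
    ceu q X (fun ω => (Y ω, Z ω)) = ∑ z, ceu (res q Z z) X Y := by
  unfold ceu
  have key : ∀ (z : γ) (a : α) (b : β),
      pmass (res q Z z) (fun ω => (X ω, Y ω)) (a, b)
        = pmass q (fun ω => (X ω, (Y ω, Z ω))) (a, (b, z)) := by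
    intro z a b
    rw [pmass_res]
    exact pmass_congr q fun ω => by simp [Prod.ext_iff, and_assoc]
  have keyY : ∀ (z : γ) (b : β),
      pmass (res q Z z) Y b = pmass q (fun ω => (Y ω, Z ω)) (b, z) := by
    intro z b
    rw [pmass_res]
  calc ∑ a, ∑ bz : β × γ, pmass q (fun ω => (X ω, (Y ω, Z ω))) (a, bz) *
        Real.logb 2 (pmass q (fun ω => (Y ω, Z ω)) bz /
          pmass q (fun ω => (X ω, (Y ω, Z ω))) (a, bz))
      = ∑ a, ∑ b, ∑ z, pmass q (fun ω => (X ω, (Y ω, Z ω))) (a, (b, z)) *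
        Real.logb 2 (pmass q (fun ω => (Y ω, Z ω)) (b, z) /
          pmass q (fun ω => (X ω, (Y ω, Z ω))) (a, (b, z))) := by
        refine Finset.sum_congr rfl fun a _ => ?_
        rw [Fintype.sum_prod_type]
    _ = ∑ z, ∑ a, ∑ b, pmass q (fun ω => (X ω, (Y ω, Z ω))) (a, (b, z)) *
        Real.logb 2 (pmass q (fun ω => (Y ω, Z ω)) (b, z) /
          pmass q (fun ω => (X ω, (Y ω, Z ω))) (a, (b, z))) := by
        have h1 : ∀ a : α, (∑ b, ∑ z, pmass q (fun ω => (X ω, (Y ω, Z ω))) (a, (b, z)) *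
            Real.logb 2 (pmass q (fun ω => (Y ω, Z ω)) (b, z) /
              pmass q (fun ω => (X ω, (Y ω, Z ω))) (a, (b, z))))
            = ∑ z, ∑ b, pmass q (fun ω => (X ω, (Y ω, Z ω))) (a, (b, z)) *
            Real.logb 2 (pmass q (fun ω => (Y ω, Z ω)) (b, z) /
              pmass q (fun ω => (X ω, (Y ω, Z ω))) (a, (b, z))) :=
          fun a => Finset.sum_comm
        rw [Finset.sum_congr rfl (fun a _ => h1 a)]
        exact Finset.sum_comm
    _ = ∑ z, ∑ a, ∑ b, pmass (res q Z z) (fun ω => (X ω, Y ω)) (a, b) *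
        Real.logb 2 (pmass (res q Z z) Y b /
          pmass (res q Z z) (fun ω => (X ω, Y ω)) (a, b)) := by
        refine Finset.sum_congr rfl fun z _ => Finset.sum_congr rfl fun a _ =>
          Finset.sum_congr rfl fun b _ => ?_
        rw [key, keyY]

lemma ceu_const_decomp (q : Ω → ℝ) (X : Ω → α) (Z : Ω → γ) :
    ceu q X Z = ∑ z, eu (res q Z z) X := by
  unfold ceu eu
  rw [Finset.sum_comm]
  refine Finset.sum_congr rfl fun z _ => Finset.sum_congr rfl fun a _ => ?_
  rw [pmass_res, sum_res]

lemma ceu_le_eu {q : Ω → ℝ} (hq : ∀ ω, 0 ≤ q ω) (X : Ω → α) (Y : Ω → β) :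
    ceu q X Y ≤ eu q X := by
  unfold ceu eu
  refine Finset.sum_le_sum fun a _ => ?_
  have key := logsum (Finset.univ : Finset β)
    (fun b => pmass q (fun ω => (X ω, Y ω)) (a, b)) (fun b => pmass q Y b)
    (fun b _ => pmass_nonneg hq _ _) (fun b _ => pmass_nonneg hq Y b)
    (fun b _ hab => by
      intro hb
      exact hab (le_antisymm (hb ▸ pmass_pair_le_snd hq X Y a b) (pmass_nonneg hq _ _)))
  rw [pmass_snd, sum_pmass] at key
  exact key

lemma eu_nonneg {q : Ω → ℝ} (hq : ∀ ω, 0 ≤ q ω) (X : Ω → α) : 0 ≤ eu q X := by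
  unfold eu
  refine Finset.sum_nonneg fun a _ => ?_
  rcases eq_or_ne (pmass q X a) 0 with h | h
  · rw [h]; simp
  · have h1 : 0 < pmass q X a := lt_of_le_of_ne (pmass_nonneg hq X a) (Ne.symm h)
    refine mul_nonneg h1.le (Real.logb_nonneg (by norm_num) ?_)
    rw [le_div_iff₀ h1, one_mul]
    exact pmass_le_total hq X a

lemma ceu_eq_zero {q : Ω → ℝ} {X : Ω → α} {Y : Ω → β} (g : β → α)
    (hfun : ∀ ω, q ω ≠ 0 → X ω = g (Y ω)) :
    ceu q X Y = 0 := by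
  unfold ceu
  refine Finset.sum_eq_zero fun a _ => Finset.sum_eq_zero fun b _ => ?_
  set J := pmass q (fun ω => (X ω, Y ω)) (a, b) with hJ
  rcases eq_or_ne J 0 with h | h
  · rw [h]; simp
  · obtain ⟨ω0, _, hω0⟩ := Finset.exists_ne_zero_of_sum_ne_zero h
    have hq0 : q ω0 ≠ 0 := by
      intro hq0'
      apply hω0
      split <;> simp [hq0']
    have hXY : X ω0 = a ∧ Y ω0 = b := by
      by_contra hc
      apply hω0
      rw [if_neg]
      simpa [Prod.ext_iff] using hc
    have hag : a = g b := by
      rw [← hXY.1, ← hXY.2]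
      exact hfun ω0 hq0
    have hJB : pmass q Y b = J := by
      rw [hJ]
      refine Finset.sum_congr rfl fun ω _ => ?_
      rcases eq_or_ne (q ω) 0 with hq' | hq'
      · split <;> split <;> simp [hq']
      · rcases eq_or_ne (Y ω) b with hy | hy
        · have hx : X ω = a := by rw [hfun ω hq', hy, ← hag]
          simp [hy, hx, Prod.ext_iff]
        · simp [hy, Prod.ext_iff]
    rw [hJB, div_self h, Real.logb_one, mul_zero]

lemma ent_const {p : Ω → ℝ} (hp1 : ∑ ω, p ω = 1) (c : α) :
    ent p (fun _ => c) = 0 := by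
  unfold ent
  refine Finset.sum_eq_zero fun a _ => ?_
  rcases eq_or_ne c a with h | h
  · have : pmass p (fun _ => c) a = 1 := by
      unfold pmass; simp [h, hp1]
    rw [this]; simp
  · have : pmass p (fun _ => c) a = 0 := by
      unfold pmass; simp [h]
    rw [this]; simp


lemma chain {μ σ : Type*} [Fintype μ] [DecidableEq μ] [Fintype σ] [DecidableEq σ]
    {p : Ω → ℝ} (hp : ∀ ω, 0 ≤ p ω) (T : ℕ) (M : Fin T → Ω → μ) (Y : Ω → σ) :
    ∀ (k : ℕ) (hk : k ≤ T),
    ent p (fun ω => (Y ω, fun l : Fin k => M ⟨l.1, l.2.trans_le hk⟩ ω)) =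
      ent p Y + ∑ l : Fin k, ceu p (M ⟨l.1, l.2.trans_le hk⟩)
        (fun ω => (Y ω, fun m : Fin l.1 => M ⟨m.1, ((m.2.trans l.2).trans_le hk)⟩ ω)) := by
  intro k
  induction k with
  | zero =>
    intro hk
    have hg : Function.Injective (fun y : σ => (y, (fun l : Fin 0 => l.elim0 : Fin 0 → μ))) :=
      fun y y' h => congrArg Prod.fst h
    have : (fun ω => (Y ω, fun l : Fin 0 => M ⟨l.1, l.2.trans_le hk⟩ ω))
        = fun ω => (Y ω, (fun l : Fin 0 => l.elim0 : Fin 0 → μ)) := by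
      funext ω
      exact Prod.ext rfl (funext fun l => l.elim0)
    rw [this, ent_comp_injective p hg Y]
    simp
  | succ k ih =>
    intro hk
    have hk' : k ≤ T := (Nat.le_succ k).trans hk
    -- the reindexing map
    set g : σ × (Fin (k + 1) → μ) → μ × (σ × (Fin k → μ)) :=
      fun yv => (yv.2 (Fin.last k), (yv.1, fun l => yv.2 l.castSucc)) with hgdef
    have hg : Function.Injective g := by
      intro ⟨y, v⟩ ⟨y', v'⟩ h
      simp only [hgdef, Prod.mk.injEq] at h
      refine Prod.ext h.2.1 ?_
      funext l
      induction l using Fin.lastCases with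
      | last => exact h.1
      | cast l => exact congrFun h.2.2 l
    have e1 : ent p (fun ω => (Y ω, fun l : Fin (k + 1) => M ⟨l.1, l.2.trans_le hk⟩ ω))
        = ent p (fun ω => (M ⟨k, Nat.lt_of_lt_of_le (Nat.lt_succ_self k) hk⟩ ω,
            (Y ω, fun l : Fin k => M ⟨l.1, l.2.trans_le hk'⟩ ω))) := by
      rw [← ent_comp_injective p hg
        (fun ω => (Y ω, fun l : Fin (k + 1) => M ⟨l.1, l.2.trans_le hk⟩ ω))]
      rfl
    have e2 := condEnt_eq_ceu hp (M ⟨k, Nat.lt_of_lt_of_le (Nat.lt_succ_self k) hk⟩)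
      (fun ω => (Y ω, fun l : Fin k => M ⟨l.1, l.2.trans_le hk'⟩ ω))
    have e3 := ih hk'
    have e4 : (∑ l : Fin (k + 1), ceu p (M ⟨l.1, l.2.trans_le hk⟩)
          (fun ω => (Y ω, fun m : Fin l.1 => M ⟨m.1, ((m.2.trans l.2).trans_le hk)⟩ ω)))
        = (∑ l : Fin k, ceu p (M ⟨l.1, l.2.trans_le hk'⟩)
          (fun ω => (Y ω, fun m : Fin l.1 => M ⟨m.1, ((m.2.trans l.2).trans_le hk')⟩ ω)))
          + ceu p (M ⟨k, Nat.lt_of_lt_of_le (Nat.lt_succ_self k) hk⟩)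
            (fun ω => (Y ω, fun l : Fin k => M ⟨l.1, l.2.trans_le hk'⟩ ω)) := by
      rw [Fin.sum_univ_castSucc]
      rfl
    linarith [e1, e2, e3, e4]


lemma step2 {μ ρ : Type*} [Fintype μ] [DecidableEq μ] [Fintype ρ] [DecidableEq ρ]
    {p : Ω → ℝ} (hp0 : ∀ ω, 0 ≤ p ω) (n : ℕ) (hn : 1 ≤ n)
    (R : Fin n → Ω → ρ) (X : Ω → μ) (Z : Ω → γ)
    (istar : γ → Fin n) (f : γ → ρ → μ)
    (hfun : ∀ ω, p ω ≠ 0 → X ω = f (Z ω) (R (istar (Z ω)) ω)) :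
    ∑ i, ceu p X (fun ω => (R i ω, Z ω)) ≤ ((n : ℝ) - 1) * ceu p X Z := by
  have key : ∀ z : γ, ∑ i, ceu (res p Z z) X (R i) ≤ ((n : ℝ) - 1) * eu (res p Z z) X := by
    intro z
    have hres : ∀ ω, 0 ≤ res p Z z ω := res_nonneg hp0 Z z
    have hzero : ceu (res p Z z) X (R (istar z)) = 0 := by
      refine ceu_eq_zero (f z) fun ω hω => ?_
      have hz : Z ω = z ∧ p ω ≠ 0 := by
        by_cases h : Z ω = z
        · refine ⟨h, fun hp' => hω ?_⟩
          unfold res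
          rw [if_pos h, hp']
        · exact absurd (by unfold res; rw [if_neg h]) hω
      rw [hfun ω hz.2, hz.1]
    have hle : ∀ i, ceu (res p Z z) X (R i) ≤ eu (res p Z z) X :=
      fun i => ceu_le_eu hres X (R i)
    calc ∑ i, ceu (res p Z z) X (R i)
        = ∑ i ∈ Finset.univ.erase (istar z), ceu (res p Z z) X (R i) := by
          rw [← Finset.sum_erase (f := fun i => ceu (res p Z z) X (R i))
            Finset.univ hzero]
      _ ≤ ∑ _i ∈ Finset.univ.erase (istar z), eu (res p Z z) X :=
          Finset.sum_le_sum fun i _ => hle i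
      _ = ((n : ℝ) - 1) * eu (res p Z z) X := by
          rw [Finset.sum_const, Finset.card_erase_of_mem (Finset.mem_univ _),
            Finset.card_univ, Fintype.card_fin, nsmul_eq_mul, Nat.cast_sub hn,
            Nat.cast_one]
  calc ∑ i, ceu p X (fun ω => (R i ω, Z ω))
      = ∑ i, ∑ z, ceu (res p Z z) X (R i) :=
        Finset.sum_congr rfl fun i _ => ceu_decomp p X (R i) Z
    _ = ∑ z, ∑ i, ceu (res p Z z) X (R i) := Finset.sum_comm
    _ ≤ ∑ z, ((n : ℝ) - 1) * eu (res p Z z) X := Finset.sum_le_sum fun z _ => key z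
    _ = ((n : ℝ) - 1) * ∑ z, eu (res p Z z) X := (Finset.mul_sum _ _ _).symm
    _ = ((n : ℝ) - 1) * ceu p X Z := by rw [← ceu_const_decomp]

end Stmt8

theorem stmt_8 {Ω ρ μ : Type*} [Fintype Ω] [Fintype ρ] [Fintype μ]
    [DecidableEq ρ] [DecidableEq μ]
    (p : Ω → ℝ) (hp : IsProb p) (n T : ℕ)
    (R : Fin n → Ω → ρ) (M : Fin T → Ω → μ)
    (hproto : ∀ j : Fin T, ∃ (istar : (Fin j.val → μ) → Fin n)
        (f : (Fin j.val → μ) → ρ → μ),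
      ∀ ω, p ω ≠ 0 →
        M j ω = f (fun l => M ⟨l.val, l.isLt.trans j.isLt⟩ ω)
                  (R (istar (fun l => M ⟨l.val, l.isLt.trans j.isLt⟩ ω)) ω)) :
    ∑ i, condEnt p (fun ω => (fun j => M j ω)) (R i) ≤
      ((n : ℝ) - 1) * ent p (fun ω => (fun j => M j ω)) := by
  classical
  obtain ⟨hp0, hp1⟩ := hp
  have hΩ : Nonempty Ω := by
    by_contra h
    rw [not_nonempty_iff] at h
    rw [Finset.univ_eq_empty, Finset.sum_empty] at hp1
    exact absurd hp1 (by norm_num)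
  have hcond : ∀ i, condEnt p (fun ω => (fun j => M j ω)) (R i)
      = ∑ l : Fin T, Stmt8.ceu p (M ⟨l.1, l.2.trans_le (le_refl T)⟩)
          (fun ω => (R i ω, fun m : Fin l.1 =>
            M ⟨m.1, (m.2.trans l.2).trans_le (le_refl T)⟩ ω)) := by
    intro i
    have hch := Stmt8.chain hp0 T M (R i) T (le_refl T)
    have hsw : ent p (fun ω => ((fun j => M j ω), R i ω))
        = ent p (fun ω => (R i ω, fun l : Fin T => M ⟨l.1, l.2.trans_le (le_refl T)⟩ ω)) := by
      rw [← Stmt8.ent_comp_injective p Prod.swap_injective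
        (fun ω => (R i ω, fun l : Fin T => M ⟨l.1, l.2.trans_le (le_refl T)⟩ ω))]
      rfl
    show ent p (fun ω => ((fun j => M j ω), R i ω)) - ent p (R i) = _
    rw [hsw, hch]
    ring
  have hginj : Function.Injective (fun v : Fin T → μ => ((), v)) :=
    fun a b h => congrArg Prod.snd h
  have hent : ent p (fun ω => (fun j => M j ω))
      = ∑ l : Fin T, Stmt8.ceu p (M ⟨l.1, l.2.trans_le (le_refl T)⟩)
          (fun ω => fun m : Fin l.1 =>
            M ⟨m.1, (m.2.trans l.2).trans_le (le_refl T)⟩ ω) := by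
    calc ent p (fun ω => (fun j => M j ω))
        = ent p (fun ω => ((), fun l : Fin T => M ⟨l.1, l.2.trans_le (le_refl T)⟩ ω)) :=
          (Stmt8.ent_comp_injective p hginj (fun ω => (fun j => M j ω))).symm
      _ = ent p (fun _ : Ω => ()) + ∑ l : Fin T,
            Stmt8.ceu p (M ⟨l.1, l.2.trans_le (le_refl T)⟩)
              (fun ω => ((), fun m : Fin l.1 =>
                M ⟨m.1, (m.2.trans l.2).trans_le (le_refl T)⟩ ω)) :=
          Stmt8.chain hp0 T M (fun _ : Ω => ()) T (le_refl T)
      _ = ∑ l : Fin T, Stmt8.ceu p (M ⟨l.1, l.2.trans_le (le_refl T)⟩)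
            (fun ω => ((), fun m : Fin l.1 =>
              M ⟨m.1, (m.2.trans l.2).trans_le (le_refl T)⟩ ω)) := by
          rw [Stmt8.ent_const hp1]
          ring
      _ = ∑ l : Fin T, Stmt8.ceu p (M ⟨l.1, l.2.trans_le (le_refl T)⟩)
            (fun ω => fun m : Fin l.1 =>
              M ⟨m.1, (m.2.trans l.2).trans_le (le_refl T)⟩ ω) :=
          Finset.sum_congr rfl fun l _ => Stmt8.ceu_comp_injective hp0 _
            (fun (a b : Fin l.1 → μ) (h : ((), a) = ((), b)) =>
              congrArg Prod.snd h) _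
  have hstep : ∀ l : Fin T,
      ∑ i, Stmt8.ceu p (M ⟨l.1, l.2.trans_le (le_refl T)⟩)
          (fun ω => (R i ω, fun m : Fin l.1 =>
            M ⟨m.1, (m.2.trans l.2).trans_le (le_refl T)⟩ ω))
      ≤ ((n : ℝ) - 1) * Stmt8.ceu p (M ⟨l.1, l.2.trans_le (le_refl T)⟩)
          (fun ω => fun m : Fin l.1 =>
            M ⟨m.1, (m.2.trans l.2).trans_le (le_refl T)⟩ ω) := by
    intro l
    obtain ⟨istar, f, hf⟩ := hproto l
    have hμ : Nonempty μ := ⟨M l hΩ.some⟩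
    have hn : 1 ≤ n := (istar (fun _ => hμ.some)).pos
    exact Stmt8.step2 hp0 n hn R (M ⟨l.1, l.2.trans_le (le_refl T)⟩)
      (fun ω => fun m : Fin l.1 => M ⟨m.1, (m.2.trans l.2).trans_le (le_refl T)⟩ ω)
      istar f (fun ω hω => hf ω hω)
  calc ∑ i, condEnt p (fun ω => (fun j => M j ω)) (R i)
      = ∑ i, ∑ l : Fin T, Stmt8.ceu p (M ⟨l.1, l.2.trans_le (le_refl T)⟩)
          (fun ω => (R i ω, fun m : Fin l.1 =>
            M ⟨m.1, (m.2.trans l.2).trans_le (le_refl T)⟩ ω)) :=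
        Finset.sum_congr rfl fun i _ => hcond i
    _ = ∑ l : Fin T, ∑ i, Stmt8.ceu p (M ⟨l.1, l.2.trans_le (le_refl T)⟩)
          (fun ω => (R i ω, fun m : Fin l.1 =>
            M ⟨m.1, (m.2.trans l.2).trans_le (le_refl T)⟩ ω)) := Finset.sum_comm
    _ ≤ ∑ l : Fin T, ((n : ℝ) - 1) * Stmt8.ceu p (M ⟨l.1, l.2.trans_le (le_refl T)⟩)
          (fun ω => fun m : Fin l.1 =>
            M ⟨m.1, (m.2.trans l.2).trans_le (le_refl T)⟩ ω) :=
        Finset.sum_le_sum fun l _ => hstep l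
    _ = ((n : ℝ) - 1) * ∑ l : Fin T, Stmt8.ceu p (M ⟨l.1, l.2.trans_le (le_refl T)⟩)
          (fun ω => fun m : Fin l.1 =>
            M ⟨m.1, (m.2.trans l.2).trans_le (le_refl T)⟩ ω) := (Finset.mul_sum _ _ _).symm
    _ = ((n : ℝ) - 1) * ent p (fun ω => (fun j => M j ω)) := by rw [hent]
end

section
/- Shearer's lemma (random subset form): Let X = (X_1,...,X_n) be a discrete random vector and S a random subset of [n] independent of X. Then H(X_S | S) ≥ H(X) · min_{i ∈ [n]} P(i ∈ S), where X_S denotes the restriction of X to the coordinates in S. -/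
noncomputable def nent {ι : Type*} [Fintype ι] (q : ι → ℝ) : ℝ :=
  ∑ i, -(q i * Real.log (q i))

set_option linter.unusedSectionVars false
set_option linter.unusedVariables false

section aux1
variable {Ω : Type*} [Fintype Ω] {p : Ω → ℝ}

lemma pmass_nonneg {α} [DecidableEq α] (hp : ∀ ω, 0 ≤ p ω) (X : Ω → α) (a : α) :
    0 ≤ pmass p X a :=
  Finset.sum_nonneg fun ω _ => by split <;> simp [hp ω]

lemma sum_pmass {α} [Fintype α] [DecidableEq α] (X : Ω → α) :
    ∑ a, pmass p X a = ∑ ω, p ω := by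
  unfold pmass
  rw [Finset.sum_comm]
  exact Finset.sum_congr rfl fun ω _ => by simp

lemma ent_eq {α} [Fintype α] [DecidableEq α] (X : Ω → α) :
    ent p X = nent (pmass p X) / Real.log 2 := by
  unfold ent nent Real.logb
  rw [Finset.sum_div]
  exact Finset.sum_congr rfl fun a _ => by ring

lemma ent_congr {α} [Fintype α] [DecidableEq α] {X Y : Ω → α} (h : ∀ ω, X ω = Y ω) :
    ent p X = ent p Y := by rw [funext h]

lemma pmass_comp {α β} [Fintype α] [DecidableEq α] [DecidableEq β]
    (X : Ω → α) (f : α → β) (b : β) :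
    pmass p (fun ω => f (X ω)) b = ∑ a, if f a = b then pmass p X a else 0 := by
  unfold pmass
  have step1 : ∀ a : α, (if f a = b then (∑ ω, if X ω = a then p ω else 0) else 0)
      = ∑ ω, if X ω = a then (if f a = b then p ω else 0) else 0 := by
    intro a
    split_ifs with h <;> simp [h]
  rw [Finset.sum_congr rfl fun a _ => step1 a, Finset.sum_comm]
  refine Finset.sum_congr rfl fun ω _ => ?_
  rw [Finset.sum_ite_eq]
  simp

lemma nent_comp_le {α β} [Fintype α] [Fintype β] [DecidableEq β] (q : α → ℝ)
    (hq : ∀ a, 0 ≤ q a) (f : α → β) :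
    nent (fun b => ∑ a, if f a = b then q a else 0) ≤ nent q := by
  set Q : β → ℝ := fun b => ∑ a, if f a = b then q a else 0 with hQ
  have hQle : ∀ a, q a ≤ Q (f a) := by
    intro a
    have : (if f a = f a then q a else 0) ≤ Q (f a) :=
      Finset.single_le_sum (f := fun a' => if f a' = f a then q a' else 0)
        (fun a' _ => by by_cases h : f a' = f a <;> simp [h, hq a'])
        (Finset.mem_univ a)
    simpa using this
  have key : ∑ b, Q b * Real.log (Q b) = ∑ a, q a * Real.log (Q (f a)) := by
    have step1 : ∀ b : β, Q b * Real.log (Q b)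
        = ∑ a, if f a = b then q a * Real.log (Q b) else 0 := by
      intro b
      rw [hQ]
      rw [Finset.sum_mul]
      exact Finset.sum_congr rfl fun a _ => by split_ifs <;> simp
    rw [Finset.sum_congr rfl fun b _ => step1 b, Finset.sum_comm]
    refine Finset.sum_congr rfl fun a _ => ?_
    rw [Finset.sum_ite_eq]
    simp
  have pt : ∀ a : α, -(q a * Real.log (Q (f a))) ≤ -(q a * Real.log (q a)) := by
    intro a
    rcases eq_or_lt_of_le (hq a) with h0 | h0
    · simp [← h0]
    · have h1 : Real.log (q a) ≤ Real.log (Q (f a)) :=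
        Real.log_le_log h0 (hQle a)
      nlinarith
  calc nent Q = ∑ a, -(q a * Real.log (Q (f a))) := by
        unfold nent
        rw [Finset.sum_neg_distrib, Finset.sum_neg_distrib, key]
    _ ≤ ∑ a, -(q a * Real.log (q a)) := Finset.sum_le_sum fun a _ => pt a
    _ = nent q := rfl

lemma ent_comp_le {α β} [Fintype α] [Fintype β] [DecidableEq α] [DecidableEq β]
    (hp : ∀ ω, 0 ≤ p ω) (X : Ω → α) (f : α → β) :
    ent p (fun ω => f (X ω)) ≤ ent p X := by
  rw [ent_eq, ent_eq, div_le_div_iff_of_pos_right (Real.log_pos one_lt_two)]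
  have h : pmass p (fun ω => f (X ω)) = fun b => ∑ a, if f a = b then pmass p X a else 0 :=
    funext fun b => pmass_comp X f b
  rw [h]
  exact nent_comp_le _ (pmass_nonneg hp X) f

lemma ent_comp_eq {α β} [Fintype α] [Fintype β] [DecidableEq α] [DecidableEq β]
    (hp : ∀ ω, 0 ≤ p ω) (X : Ω → α) (f : α → β) (g : β → α)
    (hgf : ∀ ω, g (f (X ω)) = X ω) :
    ent p (fun ω => f (X ω)) = ent p X := by
  refine le_antisymm (ent_comp_le hp X f) ?_
  have h2 := ent_comp_le hp (fun ω => f (X ω)) g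
  rwa [ent_congr hgf] at h2


end aux1

lemma gibbs_point (P A B C : ℝ) (hP : 0 ≤ P) (hA : 0 ≤ A) (hB : 0 ≤ B) (hC : 0 ≤ C)
    (hPA : P ≤ A) (hPB : P ≤ B) (hPC : P ≤ C) :
    P * Real.log A + P * Real.log B - P * Real.log P - P * Real.log C
      ≤ A * B / C - P := by
  rcases eq_or_lt_of_le hP with h0 | h0
  · rw [← h0]
    simp
    positivity
  · have hA' : 0 < A := lt_of_lt_of_le h0 hPA
    have hB' : 0 < B := lt_of_lt_of_le h0 hPB
    have hC' : 0 < C := lt_of_lt_of_le h0 hPC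
    have hr : 0 < A * B / C := by positivity
    have hlog : Real.log A + Real.log B - Real.log C - Real.log P
        = Real.log (A * B / C / P) := by
      rw [Real.log_div (by positivity) h0.ne', Real.log_div (by positivity) hC'.ne',
        Real.log_mul hA'.ne' hB'.ne']
    have hls := Real.log_le_sub_one_of_pos (div_pos hr h0)
    have h2 : P * Real.log (A * B / C / P) ≤ P * (A * B / C / P - 1) :=
      mul_le_mul_of_nonneg_left hls hP
    have h3 : P * (A * B / C / P - 1) = A * B / C - P := by
      field_simp
    nlinarith [hlog, h2, h3]

lemma nent_submod {α β γ : Type*} [Fintype α] [Fintype β] [Fintype γ]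
    (P : α × β × γ → ℝ) (hP : ∀ t, 0 ≤ P t) :
    nent P + nent (fun z : γ => ∑ x, ∑ y, P (x, y, z)) ≤
      nent (fun xz : α × γ => ∑ y, P (xz.1, y, xz.2)) +
      nent (fun yz : β × γ => ∑ x, P (x, yz.1, yz.2)) := by
  set A : α → γ → ℝ := fun x z => ∑ y, P (x, y, z) with hA
  set B : β → γ → ℝ := fun y z => ∑ x, P (x, y, z) with hB
  set C : γ → ℝ := fun z => ∑ x, ∑ y, P (x, y, z) with hC
  have hA0 : ∀ x z, 0 ≤ A x z := fun x z => Finset.sum_nonneg fun y _ => hP _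
  have hB0 : ∀ y z, 0 ≤ B y z := fun y z => Finset.sum_nonneg fun x _ => hP _
  have hC0 : ∀ z, 0 ≤ C z := fun z => Finset.sum_nonneg fun x _ =>
    Finset.sum_nonneg fun y _ => hP _
  have hPA : ∀ x y z, P (x, y, z) ≤ A x z := fun x y z =>
    Finset.single_le_sum (f := fun y' => P (x, y', z)) (fun y' _ => hP _) (Finset.mem_univ y)
  have hPB : ∀ x y z, P (x, y, z) ≤ B y z := fun x y z =>
    Finset.single_le_sum (f := fun x' => P (x', y, z)) (fun x' _ => hP _) (Finset.mem_univ x)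
  have hAC : ∀ x z, A x z ≤ C z := fun x z =>
    Finset.single_le_sum (f := fun x' => A x' z) (fun x' _ => hA0 _ _) (Finset.mem_univ x)
  have hPC : ∀ x y z, P (x, y, z) ≤ C z := fun x y z => (hPA x y z).trans (hAC x z)
  -- expand all nents as triple sums
  have eP : nent P = ∑ x, ∑ y, ∑ z, -(P (x,y,z) * Real.log (P (x,y,z))) := by
    unfold nent
    rw [Fintype.sum_prod_type]
    exact Finset.sum_congr rfl fun x _ => by rw [Fintype.sum_prod_type]
  have collapseA : ∀ x z, ∑ y : β, -(P (x, y, z) * Real.log (A x z))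
      = -(A x z * Real.log (A x z)) := by
    intro x z
    rw [Finset.sum_neg_distrib, ← Finset.sum_mul]
  have eA : nent (fun xz : α × γ => A xz.1 xz.2)
      = ∑ x, ∑ y, ∑ z, -(P (x,y,z) * Real.log (A x z)) := by
    unfold nent
    rw [Fintype.sum_prod_type]
    refine Finset.sum_congr rfl fun x _ => ?_
    rw [Finset.sum_comm]
    exact Finset.sum_congr rfl fun z _ => (collapseA x z).symm
  have collapseB : ∀ y z, ∑ x : α, -(P (x, y, z) * Real.log (B y z))
      = -(B y z * Real.log (B y z)) := by
    intro y z
    rw [Finset.sum_neg_distrib, ← Finset.sum_mul]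
  have eB : nent (fun yz : β × γ => B yz.1 yz.2)
      = ∑ x, ∑ y, ∑ z, -(P (x,y,z) * Real.log (B y z)) := by
    unfold nent
    rw [Fintype.sum_prod_type]
    rw [Finset.sum_comm (f := fun x y => ∑ z, -(P (x, y, z) * Real.log (B y z)))]
    refine Finset.sum_congr rfl fun y _ => ?_
    rw [Finset.sum_comm]
    exact Finset.sum_congr rfl fun z _ => (collapseB y z).symm
  have collapseC : ∀ z, ∑ x : α, ∑ y : β, -(P (x, y, z) * Real.log (C z))
      = -(C z * Real.log (C z)) := by
    intro z
    have h1 : ∀ x, ∑ y : β, -(P (x, y, z) * Real.log (C z))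
        = -(A x z * Real.log (C z)) := fun x => by
      rw [Finset.sum_neg_distrib, ← Finset.sum_mul]
    rw [Finset.sum_congr rfl fun x _ => h1 x, Finset.sum_neg_distrib, ← Finset.sum_mul]
  have eC : nent C = ∑ x, ∑ y, ∑ z, -(P (x,y,z) * Real.log (C z)) := by
    unfold nent
    rw [show (∑ x, ∑ y, ∑ z, -(P (x,y,z) * Real.log (C z)))
        = ∑ z, ∑ x : α, ∑ y : β, -(P (x,y,z) * Real.log (C z)) by
      rw [Finset.sum_comm (f := fun z x => ∑ y : β, -(P (x, y, z) * Real.log (C z)))]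
      exact Finset.sum_congr rfl fun x _ => Finset.sum_comm]
    exact Finset.sum_congr rfl fun z _ => (collapseC z).symm
  -- The Gibbs bound
  have hBtot : ∀ z, ∑ y, B y z = C z := fun z => Finset.sum_comm
  have hr_le : ∀ z, (∑ x, ∑ y, A x z * B y z / C z) ≤ C z := by
    intro z
    have h1 : ∀ x, ∑ y, A x z * B y z / C z = A x z * C z / C z := fun x => by
      rw [← Finset.sum_div, ← Finset.mul_sum, hBtot]
    rw [Finset.sum_congr rfl fun x _ => h1 x, ← Finset.sum_div, ← Finset.sum_mul]
    rcases eq_or_lt_of_le (hC0 z) with h0 | h0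
    · rw [← h0]
      simp
    · rw [show (∑ x, A x z) = C z from rfl, mul_div_assoc, div_self h0.ne', mul_one]
  have hPtot : ∑ x, ∑ y, ∑ z, P (x, y, z) = ∑ z, C z := by
    rw [Finset.sum_comm (f := fun z x => ∑ y : β, P (x, y, z))]
    exact Finset.sum_congr rfl fun x _ => Finset.sum_comm
  have hsum_r : ∑ x, ∑ y, ∑ z, A x z * B y z / C z ≤ ∑ x, ∑ y, ∑ z, P (x, y, z) := by
    rw [hPtot]
    calc ∑ x, ∑ y, ∑ z, A x z * B y z / C z
        = ∑ z, ∑ x, ∑ y, A x z * B y z / C z := by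
          rw [Finset.sum_comm (f := fun z x => ∑ y, A x z * B y z / C z)]
          exact Finset.sum_congr rfl fun x _ => Finset.sum_comm
      _ ≤ ∑ z, C z := Finset.sum_le_sum fun z _ => hr_le z
  have main : ∑ x, ∑ y, ∑ z,
      (P (x,y,z) * Real.log (A x z) + P (x,y,z) * Real.log (B y z)
        - P (x,y,z) * Real.log (P (x,y,z)) - P (x,y,z) * Real.log (C z))
      ≤ ∑ x, ∑ y, ∑ z, (A x z * B y z / C z - P (x,y,z)) := by
    refine Finset.sum_le_sum fun x _ => Finset.sum_le_sum fun y _ =>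
      Finset.sum_le_sum fun z _ => ?_
    exact gibbs_point (P (x,y,z)) (A x z) (B y z) (C z) (hP _) (hA0 _ _) (hB0 _ _)
      (hC0 _) (hPA _ _ _) (hPB _ _ _) (hPC _ _ _)
  have hD : ∑ x, ∑ y, ∑ z, (A x z * B y z / C z - P (x,y,z)) ≤ 0 := by
    have := hsum_r
    simp only [Finset.sum_sub_distrib]
    linarith
  rw [eP, eA, eB, eC]
  simp only [Finset.sum_add_distrib.symm] at *
  have expand : ∀ x y z,
      P (x,y,z) * Real.log (A x z) + P (x,y,z) * Real.log (B y z)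
        - P (x,y,z) * Real.log (P (x,y,z)) - P (x,y,z) * Real.log (C z)
      = (-(P (x,y,z) * Real.log (P (x,y,z))) + -(P (x,y,z) * Real.log (C z)))
        - (-(P (x,y,z) * Real.log (A x z)) + -(P (x,y,z) * Real.log (B y z))) := by
    intro x y z
    ring
  have main' := main
  rw [Finset.sum_congr rfl fun x _ => Finset.sum_congr rfl fun y _ =>
    Finset.sum_congr rfl fun z _ => expand x y z] at main'
  simp only [Finset.sum_sub_distrib, Finset.sum_add_distrib] at main' hD ⊢
  linarith


section aux2
variable {Ω : Type*} [Fintype Ω] {p : Ω → ℝ}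
variable {α β γ : Type*} [Fintype α] [Fintype β] [Fintype γ]
  [DecidableEq α] [DecidableEq β] [DecidableEq γ]

lemma pmass_marg1 (X : Ω → α) (Y : Ω → β) (Z : Ω → γ) (x : α) (z : γ) :
    pmass p (fun ω => (X ω, Z ω)) (x, z)
      = ∑ y, pmass p (fun ω => (X ω, Y ω, Z ω)) (x, y, z) := by
  unfold pmass
  rw [Finset.sum_comm]
  refine Finset.sum_congr rfl fun ω _ => ?_
  by_cases hx : X ω = x <;> by_cases hz : Z ω = z <;>
    simp [Prod.ext_iff, hx, hz, Finset.sum_ite_eq]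

lemma pmass_marg2 (X : Ω → α) (Y : Ω → β) (Z : Ω → γ) (y : β) (z : γ) :
    pmass p (fun ω => (Y ω, Z ω)) (y, z)
      = ∑ x, pmass p (fun ω => (X ω, Y ω, Z ω)) (x, y, z) := by
  unfold pmass
  rw [Finset.sum_comm]
  refine Finset.sum_congr rfl fun ω _ => ?_
  by_cases hy : Y ω = y <;> by_cases hz : Z ω = z <;>
    simp [Prod.ext_iff, hy, hz, Finset.sum_ite_eq]

lemma pmass_marg3 (X : Ω → α) (Y : Ω → β) (Z : Ω → γ) (z : γ) :
    pmass p Z z = ∑ x, ∑ y, pmass p (fun ω => (X ω, Y ω, Z ω)) (x, y, z) := by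
  unfold pmass
  rw [show (∑ x, ∑ y, ∑ ω, if (X ω, Y ω, Z ω) = (x, y, z) then p ω else 0)
      = ∑ ω, ∑ x, ∑ y, if (X ω, Y ω, Z ω) = (x, y, z) then p ω else 0 by
    calc (∑ x : α, ∑ y : β, ∑ ω : Ω, if (X ω, Y ω, Z ω) = (x, y, z) then p ω else 0)
        = ∑ x : α, ∑ ω : Ω, ∑ y : β, (if (X ω, Y ω, Z ω) = (x, y, z) then p ω else 0) :=
          Finset.sum_congr rfl fun x _ => Finset.sum_comm
      _ = ∑ ω : Ω, ∑ x : α, ∑ y : β, (if (X ω, Y ω, Z ω) = (x, y, z) then p ω else 0) :=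
          Finset.sum_comm]
  refine Finset.sum_congr rfl fun ω _ => ?_
  by_cases hz : Z ω = z <;> simp [Prod.ext_iff, hz, ite_and, Finset.sum_ite_eq]

lemma ent_submod (hp : ∀ ω, 0 ≤ p ω) (X : Ω → α) (Y : Ω → β) (Z : Ω → γ) :
    ent p (fun ω => (X ω, Y ω, Z ω)) + ent p Z ≤
      ent p (fun ω => (X ω, Z ω)) + ent p (fun ω => (Y ω, Z ω)) := by
  rw [ent_eq, ent_eq, ent_eq, ent_eq, ← add_div, ← add_div,
    div_le_div_iff_of_pos_right (Real.log_pos one_lt_two)]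
  have h1 : pmass p (fun ω => (X ω, Z ω))
      = fun xz : α × γ => ∑ y, pmass p (fun ω => (X ω, Y ω, Z ω)) (xz.1, y, xz.2) :=
    funext fun xz => pmass_marg1 X Y Z xz.1 xz.2
  have h2 : pmass p (fun ω => (Y ω, Z ω))
      = fun yz : β × γ => ∑ x, pmass p (fun ω => (X ω, Y ω, Z ω)) (x, yz.1, yz.2) :=
    funext fun yz => pmass_marg2 X Y Z yz.1 yz.2
  have h3 : pmass p Z
      = fun z => ∑ x, ∑ y, pmass p (fun ω => (X ω, Y ω, Z ω)) (x, y, z) :=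
    funext fun z => pmass_marg3 X Y Z z
  rw [h1, h2, h3]
  exact nent_submod _ (pmass_nonneg hp _)

lemma ent_cond_mono (hp : ∀ ω, 0 ≤ p ω) (U : Ω → α) (V : Ω → β) (g : β → γ) :
    ent p (fun ω => (U ω, V ω)) - ent p V ≤
      ent p (fun ω => (U ω, g (V ω))) - ent p (fun ω => g (V ω)) := by
  have hsub := ent_submod hp U V (fun ω => g (V ω))
  have h1 : ent p (fun ω => (U ω, V ω, g (V ω))) = ent p (fun ω => (U ω, V ω)) :=
    ent_comp_eq hp (fun ω => (U ω, V ω))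
      (fun t => (t.1, t.2, g t.2)) (fun t => (t.1, t.2.1)) (fun ω => rfl)
  have h2 : ent p (fun ω => (V ω, g (V ω))) = ent p V :=
    ent_comp_eq hp V (fun v => (v, g v)) (fun t => t.1) (fun ω => rfl)
  linarith

lemma ent_pair_ge (hp : ∀ ω, 0 ≤ p ω) (U : Ω → α) (V : Ω → β) :
    ent p V ≤ ent p (fun ω => (U ω, V ω)) :=
  ent_comp_le hp (fun ω => (U ω, V ω)) Prod.snd

lemma pmass_le_one (hp : IsProb p) {α' : Type*} [Fintype α'] [DecidableEq α']
    (X : Ω → α') (a : α') : pmass p X a ≤ 1 := by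
  have h := Finset.single_le_sum (f := pmass p X)
    (fun a' _ => pmass_nonneg hp.1 X a') (Finset.mem_univ a)
  rwa [sum_pmass, hp.2] at h

lemma ent_nonneg (hp : IsProb p) (X : Ω → α) : 0 ≤ ent p X := by
  refine Finset.sum_nonneg fun a _ => ?_
  have h0 := pmass_nonneg hp.1 X a
  have h1 := pmass_le_one hp X a
  have := Real.logb_nonpos (b := 2) one_lt_two h0 h1
  nlinarith

lemma ent_subsingleton (hp : IsProb p) {α' : Type*} [Fintype α'] [DecidableEq α']
    [Subsingleton α'] (X : Ω → α') : ent p X = 0 := by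
  unfold ent
  refine Finset.sum_eq_zero fun a _ => ?_
  have : pmass p X a = 1 := by
    unfold pmass
    rw [← hp.2]
    exact Finset.sum_congr rfl fun ω _ => by simp [Subsingleton.elim (X ω) a]
  simp [this]


end aux2

section main
variable {Ω : Type*} [Fintype Ω] {p : Ω → ℝ}
variable {α : Type*} [Fintype α] [DecidableEq α] {n : ℕ}

/-- restriction of the random vector to coordinates in `s` -/
def restr (X : Fin n → Ω → α) (s : Finset (Fin n)) : Ω → ({i : Fin n // i ∈ s} → α) :=
  fun ω i => X i.1 ω

def pre (i : Fin n) : Finset (Fin n) := Finset.univ.filter (· < i)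

noncomputable def dC (p : Ω → ℝ) (X : Fin n → Ω → α) (i : Fin n) : ℝ :=
  ent p (fun ω => (X i ω, restr X (pre i) ω)) - ent p (restr X (pre i))

lemma ent_restr_insert (hp : ∀ ω, 0 ≤ p ω) (X : Fin n → Ω → α)
    (a : Fin n) (s : Finset (Fin n)) (ha : a ∉ s) :
    ent p (restr X (insert a s)) = ent p (fun ω => (X a ω, restr X s ω)) := by
  refine (ent_comp_eq hp (restr X (insert a s))
    (fun v => (v ⟨a, Finset.mem_insert_self a s⟩,
      fun j : {i : Fin n // i ∈ s} => v ⟨j.1, Finset.mem_insert_of_mem j.2⟩))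
    (fun t => fun j : {i : Fin n // i ∈ insert a s} =>
      if h : j.1 ∈ s then t.2 ⟨j.1, h⟩ else t.1)
    (fun ω => ?_)).symm
  funext j
  by_cases h : j.1 ∈ s
  · simp [restr, h]
  · have hja : j.1 = a := by
      rcases Finset.mem_insert.mp j.2 with h' | h'
      · exact h'
      · exact absurd h' h
    simp [restr, h, hja]

lemma dC_nonneg (hp : IsProb p) (X : Fin n → Ω → α) (i : Fin n) : 0 ≤ dC p X i :=
  sub_nonneg.mpr (ent_pair_ge hp.1 _ _)

lemma dC_le (hp : ∀ ω, 0 ≤ p ω) (X : Fin n → Ω → α) (a : Fin n)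
    (s : Finset (Fin n)) (hs : s ⊆ pre a) :
    dC p X a ≤ ent p (fun ω => (X a ω, restr X s ω)) - ent p (restr X s) := by
  have h := ent_cond_mono hp (X a) (restr X (pre a))
    (fun v => fun j : {i : Fin n // i ∈ s} => v ⟨j.1, hs j.2⟩)
  exact h

lemma claim (hp : IsProb p) (X : Fin n → Ω → α) (s : Finset (Fin n)) :
    ∑ i ∈ s, dC p X i ≤ ent p (restr X s) := by
  induction s using Finset.induction_on_max with
  | empty => simpa using ent_nonneg hp (restr X ∅)
  | insert a s hlt ih =>
    have ha : a ∉ s := fun h => lt_irrefl a (hlt a h)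
    have hs : s ⊆ pre a := fun j hj => by
      simp [pre, hlt j hj]
    rw [Finset.sum_insert ha, ent_restr_insert hp.1 X a s ha]
    have h1 := dC_le hp.1 X a s hs
    have h2 := ent_pair_ge hp.1 (X a) (restr X s)
    linarith

def prek (n k : ℕ) : Finset (Fin n) := Finset.univ.filter (fun j : Fin n => j.1 < k)

lemma prek_zero : prek n 0 = ∅ := by simp [prek]

lemma prek_succ (k : ℕ) (hk : k < n) :
    prek n (k + 1) = insert ⟨k, hk⟩ (prek n k) := by
  ext j
  simp only [prek, Finset.mem_filter, Finset.mem_univ, true_and, Finset.mem_insert]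
  constructor
  · intro h
    rcases Nat.lt_succ_iff_lt_or_eq.mp h with h' | h'
    · exact Or.inr (by simpa [prek] using h')
    · exact Or.inl (Fin.ext h')
  · rintro (rfl | h)
    · exact Nat.lt_succ_self k
    · exact Nat.lt_succ_of_lt (by simpa [prek] using h)

lemma prek_top (hn : 0 < n) : prek n n = Finset.univ := by
  ext j; simp [prek, j.2]

lemma pre_eq_prek (k : ℕ) (hk : k < n) : pre (⟨k, hk⟩ : Fin n) = prek n k := by
  ext j
  simp [pre, prek, Fin.lt_def]

lemma chain (hp : IsProb p) (X : Fin n → Ω → α) :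
    ∀ k, k ≤ n → ent p (restr X (prek n k)) = ∑ i ∈ prek n k, dC p X i := by
  intro k
  induction k with
  | zero =>
    intro _
    rw [prek_zero]
    rw [Finset.sum_empty]
    have : Subsingleton ({i : Fin n // i ∈ (∅ : Finset (Fin n))} → α) := by
      have : IsEmpty {i : Fin n // i ∈ (∅ : Finset (Fin n))} := by
        constructor; rintro ⟨i, hi⟩; simp at hi
      infer_instance
    exact ent_subsingleton hp _
  | succ k ih =>
    intro hk1
    have hk : k < n := hk1
    have ha : (⟨k, hk⟩ : Fin n) ∉ prek n k := by simp [prek]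
    rw [prek_succ k hk, Finset.sum_insert ha, ent_restr_insert hp.1 X _ _ ha,
      ← ih (le_of_lt hk)]
    have hd : dC p X ⟨k, hk⟩
        = ent p (fun ω => (X ⟨k, hk⟩ ω, restr X (prek n k) ω))
          - ent p (restr X (prek n k)) := by
      unfold dC
      rw [pre_eq_prek k hk]
    linarith [hd]

set_option maxHeartbeats 1000000 in
lemma ent_full (hp : IsProb p) (hn : 0 < n) (X : Fin n → Ω → α) :
    ent p (fun ω => fun i => X i ω) = ∑ i, dC p X i := by
  have h1 : ent p (restr X (prek n n)) = ent p (fun ω => fun i => X i ω) :=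
    ent_comp_eq hp.1 (fun ω => fun i => X i ω)
      (fun v => fun j : {i : Fin n // i ∈ prek n n} => v j.1)
      (fun w => fun i => w ⟨i, by simp [prek, i.isLt]⟩) (fun ω => rfl)
  have h2 := chain hp X n le_rfl
  rw [← h1, h2, prek_top hn]



lemma weight_eq (S : Ω → Finset (Fin n)) (i : Fin n) :
    (∑ s : Finset (Fin n), if i ∈ s then pmass p S s else 0)
      = ∑ ω, if i ∈ S ω then p ω else 0 := by
  unfold pmass
  have step1 : ∀ s : Finset (Fin n),
      (if i ∈ s then (∑ ω, if S ω = s then p ω else 0) else 0)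
      = ∑ ω, if S ω = s then (if i ∈ s then p ω else 0) else 0 := by
    intro s
    split_ifs with h <;> simp [h]
  rw [Finset.sum_congr rfl fun s _ => step1 s, Finset.sum_comm]
  refine Finset.sum_congr rfl fun ω _ => ?_
  rw [Finset.sum_ite_eq]
  simp



end main

theorem stmt_9 {Ω α : Type*} [Fintype Ω] [Fintype α] [DecidableEq α]
    (p : Ω → ℝ) (hp : IsProb p) (n : ℕ) (hn : 0 < n)
    (X : Fin n → Ω → α) (S : Ω → Finset (Fin n))
    (hindep : ∀ (s : Finset (Fin n)) (x : Fin n → α),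
      pmass p (fun ω => (S ω, fun i => X i ω)) (s, x) =
        pmass p S s * pmass p (fun ω => fun i => X i ω) x) :
    ent p (fun ω => fun i => X i ω) *
        (Finset.univ.inf' ⟨⟨0, hn⟩, Finset.mem_univ _⟩
          (fun i : Fin n => ∑ ω, if i ∈ S ω then p ω else 0)) ≤
      ∑ s : Finset (Fin n),
        pmass p S s * ent p (fun ω => fun i : {i : Fin n // i ∈ s} => X i.1 ω) := by
  classical
  set m : ℝ := Finset.univ.inf' ⟨⟨0, hn⟩, Finset.mem_univ _⟩
    (fun i : Fin n => ∑ ω, if i ∈ S ω then p ω else 0) with hm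
  have hml : ∀ i : Fin n, m ≤ ∑ ω, if i ∈ S ω then p ω else 0 := fun i =>
    Finset.inf'_le _ (Finset.mem_univ i)
  have step1 : ∀ s : Finset (Fin n),
      pmass p S s * (∑ i ∈ s, dC p X i) ≤ pmass p S s * ent p (restr X s) :=
    fun s => mul_le_mul_of_nonneg_left (claim hp X s) (pmass_nonneg hp.1 S s)
  have step2 : (∑ s : Finset (Fin n), pmass p S s * (∑ i ∈ s, dC p X i))
      = ∑ i : Fin n, (∑ ω, if i ∈ S ω then p ω else 0) * dC p X i := by
    have e1 : ∀ s : Finset (Fin n),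
        pmass p S s * (∑ i ∈ s, dC p X i)
        = ∑ i : Fin n, (if i ∈ s then pmass p S s * dC p X i else 0) := by
      intro s
      rw [Finset.mul_sum]
      rw [show (∑ i : Fin n, if i ∈ s then pmass p S s * dC p X i else 0)
          = ∑ i ∈ Finset.univ ∩ s, pmass p S s * dC p X i from Finset.sum_ite_mem _ _ _]
      rw [Finset.univ_inter]
    rw [Finset.sum_congr rfl fun s _ => e1 s, Finset.sum_comm]
    refine Finset.sum_congr rfl fun i _ => ?_
    rw [← weight_eq S i, Finset.sum_mul]
    refine Finset.sum_congr rfl fun s _ => ?_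
    split_ifs <;> simp
  have step3 : ∀ i : Fin n, m * dC p X i
      ≤ (∑ ω, if i ∈ S ω then p ω else 0) * dC p X i := fun i =>
    mul_le_mul_of_nonneg_right (hml i) (dC_nonneg hp X i)
  have hfull := ent_full hp hn X
  calc ent p (fun ω => fun i => X i ω) * m = ∑ i : Fin n, m * dC p X i := by
        rw [hfull, Finset.sum_mul]
        exact Finset.sum_congr rfl fun i _ => mul_comm _ _
    _ ≤ ∑ i : Fin n, (∑ ω, if i ∈ S ω then p ω else 0) * dC p X i :=
        Finset.sum_le_sum fun i _ => step3 i
    _ = ∑ s : Finset (Fin n), pmass p S s * (∑ i ∈ s, dC p X i) := step2.symm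
    _ ≤ ∑ s : Finset (Fin n), pmass p S s * ent p (restr X s) :=
        Finset.sum_le_sum fun s _ => step1 s
end
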